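/- arXiv:2105.09228 — 10 statements merged into one kernel-verified Lean document; each statement's English description precedes it below -/
import Mathlib

section
/- Fix C > 0, σ > 0, κ ≥ 0, p ∈ (0, 1/4), x ∈ [0, 4] and y ∈ ℝ with 3 − (x + y)/2 > 0. Define z̄ₐ = (3 − (x+y)/2)(κ + σ)/(C(κ + (1 − p·x)σ)) and z̄_d = p·x·(3 − (x+y)/2)²·(κ + σ)/(C(κ + (1 − p·x)σ)²). Then z̄ₐ > 0, z̄_d ≥ 0 (with z̄_d > 0 if x > 0), and (z̄ₐ, z̄_d) is an equilibrium of the active/dormant mean-field system, i.e., (3 − (x+y)/2 − C·z̄ₐ)·z̄ₐ + σ·z̄_d = 0 and C·p·x·z̄ₐ² − (κ + σ)·z̄_d = 0. -/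
/-- The pair `(z̄ₐ, z̄_d)` is a (coordinatewise nonnegative, active-positive)
equilibrium of the active/dormant mean-field system for the resident trait `(x, y)`. -/
theorem resident_equilibrium
    (C σ κ p x y za zd : ℝ)
    (hC : 0 < C) (hσ : 0 < σ) (hκ : 0 ≤ κ)
    (hp0 : 0 < p) (hp1 : p < 1 / 4)
    (hx0 : 0 ≤ x) (hx4 : x ≤ 4)
    (hfit : 0 < 3 - (x + y) / 2)
    (hza : za = (3 - (x + y) / 2) * (κ + σ) / (C * (κ + (1 - p * x) * σ)))
    (hzd : zd = p * x * (3 - (x + y) / 2) ^ 2 * (κ + σ) / (C * (κ + (1 - p * x) * σ) ^ 2)) :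
    0 < za ∧ 0 ≤ zd ∧ (0 < x → 0 < zd) ∧
    (3 - (x + y) / 2 - C * za) * za + σ * zd = 0 ∧
    C * p * x * za ^ 2 - (κ + σ) * zd = 0 := by
  have hpx : p * x < 1 := by nlinarith
  have hKσ : 0 < κ + σ := by linarith
  have hden : 0 < κ + (1 - p * x) * σ := by nlinarith
  have hCden : 0 < C * (κ + (1 - p * x) * σ) := mul_pos hC hden
  have hCden2 : 0 < C * (κ + (1 - p * x) * σ) ^ 2 := by positivity
  have hza' : 0 < za := by
    rw [hza]; exact div_pos (mul_pos hfit hKσ) hCden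
  have hzd0 : 0 ≤ zd := by
    rw [hzd]; positivity
  refine ⟨hza', hzd0, fun hx => ?_, ?_, ?_⟩
  · rw [hzd]
    have : 0 < p * x * (3 - (x + y) / 2) ^ 2 * (κ + σ) := by positivity
    exact div_pos this hCden2
  · rw [hza, hzd]
    field_simp [show κ + σ * (1 - x * p) ≠ 0 by rw [show κ + σ * (1 - x * p) = κ + (1 - p * x) * σ by ring]; exact hden.ne']
    ring
  · rw [hza, hzd]
    field_simp
    ring
end

section
/- Fix b1, b2, d1, d2 ≥ 0, σ2 > 0, C > 0, p ∈ (0, 1) and T > 0. Let φ = (φ1, φ2) : [0, T] → ℝ² be differentiable with φ1' = (b1 − d1 − C·φ1)·φ1 + σ2·φ2, φ2' = (b2 − d2 − σ2)·φ2 + C·p·φ1², and with φ1(0) > 0 and φ2(0) > 0. Then for all t ∈ [0, T] one has φ1(t) > 0, φ2(t) > 0, and φ1(t) + φ2(t) ≤ (φ1(0) + φ2(0))·exp(2·max(b1 − d1, b2 − d2, 0)·t). -/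
/-- Solutions of the fluid-limit ODE of a logistic bi-type branching process
started with positive coordinates stay positive on `[0, T]`, and the total mass
grows at most exponentially at rate `2·max(b1 − d1, b2 − d2, 0)`. -/
theorem logistic_bitype_ode_positivity_and_growth
    (b1 b2 d1 d2 σ2 C p T : ℝ)
    (hb1 : 0 ≤ b1) (hb2 : 0 ≤ b2) (hd1 : 0 ≤ d1) (hd2 : 0 ≤ d2)
    (hσ2 : 0 < σ2) (hC : 0 < C) (hp0 : 0 < p) (hp1 : p < 1) (hT : 0 < T)
    (φ1 φ2 : ℝ → ℝ)
    (hφ1 : ∀ t ∈ Set.Icc (0 : ℝ) T,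
      HasDerivAt φ1 ((b1 - d1 - C * φ1 t) * φ1 t + σ2 * φ2 t) t)
    (hφ2 : ∀ t ∈ Set.Icc (0 : ℝ) T,
      HasDerivAt φ2 ((b2 - d2 - σ2) * φ2 t + C * p * (φ1 t) ^ 2) t)
    (h10 : 0 < φ1 0) (h20 : 0 < φ2 0) :
    ∀ t ∈ Set.Icc (0 : ℝ) T,
      0 < φ1 t ∧ 0 < φ2 t ∧
      φ1 t + φ2 t ≤ (φ1 0 + φ2 0) *
        Real.exp (2 * max (max (b1 - d1) (b2 - d2)) 0 * t) := by
  set M : ℝ := max (max (b1 - d1) (b2 - d2)) 0 with hMdef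
  have hM0 : 0 ≤ M := le_max_right _ _
  have hM1 : b1 - d1 ≤ M := le_trans (le_max_left _ _) (le_max_left _ _)
  have hM2 : b2 - d2 ≤ M := le_trans (le_max_right _ _) (le_max_left _ _)
  have hc1 : ContinuousOn φ1 (Set.Icc 0 T) :=
    fun t ht => (hφ1 t ht).continuousAt.continuousWithinAt
  have hc2 : ContinuousOn φ2 (Set.Icc 0 T) :=
    fun t ht => (hφ2 t ht).continuousAt.continuousWithinAt
  set a : ℝ := b2 - d2 - σ2 with hadef
  -- Step 1: φ2 > 0 on [0,T]
  have hgd : ∀ t ∈ Set.Icc (0:ℝ) T,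
      HasDerivAt (fun u => φ2 u * Real.exp (-a * u))
        (C * p * (φ1 t) ^ 2 * Real.exp (-a * t)) t := by
    intro t ht
    have he : HasDerivAt (fun u => Real.exp (-a * u)) (-a * Real.exp (-a * t)) t := by
      have h1 : HasDerivAt (fun u : ℝ => -a * u) (-a) t := by
        simpa using (hasDerivAt_id t).const_mul (-a)
      have h2 := h1.exp
      convert h2 using 1
      ring
    have := (hφ2 t ht).mul he
    exact this.congr_deriv (by ring)
  have h2pos : ∀ t ∈ Set.Icc (0:ℝ) T, 0 < φ2 t := by
    have hmono : MonotoneOn (fun u => φ2 u * Real.exp (-a * u)) (Set.Icc 0 T) := by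
      apply monotoneOn_of_deriv_nonneg (convex_Icc 0 T)
      · exact fun t ht => ((hgd t ht).continuousAt).continuousWithinAt
      · intro t ht
        rw [interior_Icc] at ht
        exact ((hgd t ⟨ht.1.le, ht.2.le⟩).differentiableAt).differentiableWithinAt
      · intro t ht
        rw [interior_Icc] at ht
        rw [(hgd t ⟨ht.1.le, ht.2.le⟩).deriv]
        positivity
    intro t ht
    have h0mem : (0:ℝ) ∈ Set.Icc (0:ℝ) T := ⟨le_refl 0, hT.le⟩
    have := hmono h0mem ht ht.1
    simp only [mul_zero, Real.exp_zero, mul_one] at this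
    nlinarith [Real.exp_pos (-a * t)]
  -- Step 2: φ1 > 0 on [0,T]
  have h1pos : ∀ t ∈ Set.Icc (0:ℝ) T, 0 < φ1 t := by
    by_contra hcon
    push_neg at hcon
    obtain ⟨t0, ht0, ht0le⟩ := hcon
    set s : Set ℝ := Set.Icc (0:ℝ) T ∩ φ1 ⁻¹' Set.Iic 0 with hsdef
    have hsne : s.Nonempty := ⟨t0, ht0, ht0le⟩
    have hscl : IsClosed s := hc1.preimage_isClosed_of_isClosed isClosed_Icc isClosed_Iic
    have hbdd : BddBelow s := ⟨0, fun x hx => hx.1.1⟩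
    set τ := sInf s with hτdef
    have hτs : τ ∈ s := hscl.csInf_mem hsne hbdd
    have hτIcc : τ ∈ Set.Icc (0:ℝ) T := hτs.1
    have hτpos : 0 < τ := by
      rcases lt_or_eq_of_le hτIcc.1 with h | h
      · exact h
      · exfalso
        have : φ1 τ ≤ 0 := hτs.2
        rw [← h] at this
        linarith
    have hlt : ∀ u, 0 ≤ u → u < τ → 0 < φ1 u := by
      intro u h0u huτ
      by_contra hle
      push_neg at hle
      have hus : u ∈ s := ⟨⟨h0u, huτ.le.trans hτIcc.2⟩, hle⟩
      exact absurd (csInf_le hbdd hus) (not_le.mpr huτ)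
    have hIoo : Set.Ioo (0:ℝ) τ ∈ nhdsWithin τ (Set.Iio τ) :=
      Ioo_mem_nhdsLT_of_mem ⟨hτpos, le_refl τ⟩
    have hτ0 : φ1 τ = 0 := by
      have htend : Filter.Tendsto φ1 (nhdsWithin τ (Set.Iio τ)) (nhds (φ1 τ)) :=
        ((hφ1 τ hτIcc).continuousAt.tendsto).mono_left nhdsWithin_le_nhds
      have hev : ∀ᶠ u in nhdsWithin τ (Set.Iio τ), 0 ≤ φ1 u := by
        filter_upwards [hIoo] with u hu
        exact (hlt u hu.1.le hu.2).le
      have hge : 0 ≤ φ1 τ := ge_of_tendsto htend hev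
      have : φ1 τ ≤ 0 := hτs.2
      linarith
    have hd : HasDerivAt φ1 (σ2 * φ2 τ) τ := by
      have := hφ1 τ hτIcc
      rw [hτ0] at this
      simpa using this
    have hdpos : 0 < σ2 * φ2 τ := mul_pos hσ2 (h2pos τ hτIcc)
    have hslope : Filter.Tendsto (slope φ1 τ) (nhdsWithin τ {τ}ᶜ) (nhds (σ2 * φ2 τ)) :=
      hasDerivAt_iff_tendsto_slope.mp hd
    have hsl2 : Filter.Tendsto (slope φ1 τ) (nhdsWithin τ (Set.Iio τ)) (nhds (σ2 * φ2 τ)) :=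
      hslope.mono_left (nhdsWithin_mono τ (fun x hx => ne_of_lt hx))
    have hev1 : ∀ᶠ u in nhdsWithin τ (Set.Iio τ), 0 < slope φ1 τ u :=
      hsl2.eventually (eventually_gt_nhds hdpos)
    have hev2 : ∀ᶠ u in nhdsWithin τ (Set.Iio τ), u ∈ Set.Ioo (0:ℝ) τ :=
      Filter.eventually_of_mem hIoo (fun x hx => hx)
    obtain ⟨u, hu1, hu2⟩ := (hev1.and hev2).exists
    have hupos : 0 < φ1 u := hlt u hu2.1.le hu2.2
    rw [slope_def_field, hτ0, sub_zero] at hu1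
    have huτ : u - τ < 0 := by linarith [hu2.2]
    rcases div_pos_iff.mp hu1 with ⟨h1, h2⟩ | ⟨h1, h2⟩ <;> linarith
  -- Step 3: exponential growth bound
  have hhd : ∀ t ∈ Set.Icc (0:ℝ) T,
      HasDerivAt (fun u => (φ1 u + φ2 u) * Real.exp (-M * u))
        (((b1 - d1 - M) * φ1 t + (b2 - d2 - M) * φ2 t - C * (1 - p) * (φ1 t) ^ 2)
          * Real.exp (-M * t)) t := by
    intro t ht
    have he : HasDerivAt (fun u => Real.exp (-M * u)) (-M * Real.exp (-M * t)) t := by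
      have h1 : HasDerivAt (fun u : ℝ => -M * u) (-M) t := by
        simpa using (hasDerivAt_id t).const_mul (-M)
      have h2 := h1.exp
      convert h2 using 1
      ring
    have := ((hφ1 t ht).add (hφ2 t ht)).mul he
    exact this.congr_deriv (by simp only [Pi.add_apply, hadef]; ring)
  have hanti : AntitoneOn (fun u => (φ1 u + φ2 u) * Real.exp (-M * u)) (Set.Icc 0 T) := by
    apply antitoneOn_of_deriv_nonpos (convex_Icc 0 T)
    · exact fun t ht => ((hhd t ht).continuousAt).continuousWithinAt
    · intro t ht
      rw [interior_Icc] at ht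
      exact ((hhd t ⟨ht.1.le, ht.2.le⟩).differentiableAt).differentiableWithinAt
    · intro t ht
      rw [interior_Icc] at ht
      have ht' : t ∈ Set.Icc (0:ℝ) T := ⟨ht.1.le, ht.2.le⟩
      rw [(hhd t ht').deriv]
      have h1 := h1pos t ht'
      have h2 := h2pos t ht'
      have hexp := Real.exp_pos (-M * t)
      have hbr : (b1 - d1 - M) * φ1 t + (b2 - d2 - M) * φ2 t - C * (1 - p) * (φ1 t) ^ 2 ≤ 0 := by
        have e1 : (b1 - d1 - M) * φ1 t ≤ 0 :=
          mul_nonpos_of_nonpos_of_nonneg (by linarith) h1.le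
        have e2 : (b2 - d2 - M) * φ2 t ≤ 0 :=
          mul_nonpos_of_nonpos_of_nonneg (by linarith) h2.le
        have e3 : 0 ≤ C * (1 - p) * (φ1 t) ^ 2 :=
          mul_nonneg (mul_nonneg hC.le (by linarith)) (sq_nonneg _)
        linarith
      exact mul_nonpos_of_nonpos_of_nonneg hbr hexp.le
  intro t ht
  refine ⟨h1pos t ht, h2pos t ht, ?_⟩
  have h0mem : (0:ℝ) ∈ Set.Icc (0:ℝ) T := ⟨le_refl 0, hT.le⟩
  have hat := hanti h0mem ht ht.1
  simp only [mul_zero, Real.exp_zero, mul_one] at hat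
  have hkey : φ1 t + φ2 t ≤ (φ1 0 + φ2 0) * Real.exp (M * t) := by
    have hk : Real.exp (-M * t) * Real.exp (M * t) = 1 := by
      rw [← Real.exp_add]
      ring_nf
      exact Real.exp_zero
    nlinarith [Real.exp_pos (M * t), Real.exp_pos (-M * t)]
  have hmono : Real.exp (M * t) ≤ Real.exp (2 * M * t) := by
    apply Real.exp_le_exp.mpr
    nlinarith [ht.1]
  calc φ1 t + φ2 t ≤ (φ1 0 + φ2 0) * Real.exp (M * t) := hkey
    _ ≤ (φ1 0 + φ2 0) * Real.exp (2 * M * t) :=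
        mul_le_mul_of_nonneg_left hmono (by linarith)
end

section
/- Assume that J has a positive real eigenvalue and that every eigenvalue of J̃ has negative real part. Then the only equilibria of the four-dimensional competition system lying in the closed nonnegative orthant [0, ∞)⁴ are (0, 0, 0, 0), (x̄ₐ, x̄_d, 0, 0) and (0, 0, ȳₐ, ȳ_d); that is, any point (xₐ, x_d, yₐ, y_d) ∈ [0, ∞)⁴ at which all four right-hand sides of the system vanish equals one of these three points. -/
set_option maxHeartbeats 1000000

open Polynomial in
lemma charpoly_eval_fin_two {R : Type*} [CommRing R] (a b c d x : R) :
    (Matrix.charpoly !![a, b; c, d]).eval x = (x - a) * (x - d) - b * c := by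
  rw [Matrix.charpoly, Matrix.det_fin_two]
  simp [Matrix.charmatrix_apply_eq, Matrix.charmatrix_apply_ne]

lemma neg_det_has_nonneg_root (T Dd : ℝ) (h : Dd ≤ 0) :
    ∃ r : ℝ, 0 ≤ r ∧ r ^ 2 - T * r + Dd = 0 := by
  have hdisc : 0 ≤ T ^ 2 - 4 * Dd := by nlinarith [sq_nonneg T]
  have hs2 : Real.sqrt (T ^ 2 - 4 * Dd) ^ 2 = T ^ 2 - 4 * Dd := Real.sq_sqrt hdisc
  have habs : |T| ≤ Real.sqrt (T ^ 2 - 4 * Dd) := by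
    rw [← Real.sqrt_sq_eq_abs]
    exact Real.sqrt_le_sqrt (by nlinarith)
  refine ⟨(T + Real.sqrt (T ^ 2 - 4 * Dd)) / 2, by linarith [neg_abs_le T], ?_⟩
  linear_combination (1 / 4 : ℝ) * hs2

/-- If `J` has a positive real eigenvalue and every eigenvalue of `J̃` has
negative real part, then the only nonnegative equilibria of the
four-dimensional competition system are `(0,0,0,0)`, `(x̄ₐ, x̄_d, 0, 0)` and
`(0, 0, ȳₐ, ȳ_d)`. (The transfer term `τ·xₐ·yₐ/(xₐ+yₐ)` is `0` when
`xₐ + yₐ = 0`, which agrees with Lean's convention `z/0 = 0`.) -/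
theorem four_dim_competition_only_equilibria
    (a1 b1 d1 d2 τ C σ2 p q xabar xdbar yabar ydbar : ℝ)
    (hd1 : 0 ≤ d1) (ha1 : d1 < a1) (hb1 : d1 < b1) (hd2 : 0 ≤ d2) (hτ : 0 ≤ τ)
    (hC : 0 < C) (hσ2 : 0 < σ2)
    (hp0 : 0 < p) (hp1 : p < 1) (hq0 : 0 < q) (hq1 : q < 1)
    (hxabar : xabar = (a1 - d1) * (d2 + σ2) / (C * (d2 + (1 - p) * σ2)))
    (hxdbar : xdbar = p * (a1 - d1) ^ 2 * (d2 + σ2) / (C * (d2 + (1 - p) * σ2) ^ 2))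
    (hyabar : yabar = (b1 - d1) * (d2 + σ2) / (C * (d2 + (1 - q) * σ2)))
    (hydbar : ydbar = q * (b1 - d1) ^ 2 * (d2 + σ2) / (C * (d2 + (1 - q) * σ2) ^ 2))
    (hJ : ∃ lam : ℝ, 0 < lam ∧
      (Matrix.charpoly
        !![b1 + τ - d1 - C * xabar, q * C * xabar; σ2, -(d2 + σ2)]).IsRoot lam)
    (hJt : ∀ z : ℂ,
      ((Matrix.map !![a1 - τ - d1 - C * yabar, p * C * yabar; σ2, -(d2 + σ2)]
        Complex.ofReal).charpoly).IsRoot z → z.re < 0) :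
    ∀ xa xd ya yd : ℝ, 0 ≤ xa → 0 ≤ xd → 0 ≤ ya → 0 ≤ yd →
      xa * (a1 - d1 - C * (xa + ya)) + σ2 * xd - τ * xa * ya / (xa + ya) = 0 →
      p * C * xa * (xa + ya) - (d2 + σ2) * xd = 0 →
      ya * (b1 - d1 - C * (xa + ya)) + σ2 * yd + τ * xa * ya / (xa + ya) = 0 →
      q * C * ya * (xa + ya) - (d2 + σ2) * yd = 0 →
      (xa, xd, ya, yd) = ((0 : ℝ), (0 : ℝ), (0 : ℝ), (0 : ℝ)) ∨
      (xa, xd, ya, yd) = (xabar, xdbar, (0 : ℝ), (0 : ℝ)) ∨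
      (xa, xd, ya, yd) = ((0 : ℝ), (0 : ℝ), yabar, ydbar) := by
  have hD2 : (0 : ℝ) < d2 + σ2 := by linarith
  have hαp : (0 : ℝ) < d2 + (1 - p) * σ2 := by nlinarith
  have hαq : (0 : ℝ) < d2 + (1 - q) * σ2 := by nlinarith
  have hxabpos : 0 < xabar := by
    rw [hxabar]; exact div_pos (by nlinarith) (by positivity)
  have hyabpos : 0 < yabar := by
    rw [hyabar]; exact div_pos (by nlinarith) (by positivity)
  have hx : C * xabar * (d2 + (1 - p) * σ2) = (a1 - d1) * (d2 + σ2) := by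
    rw [hxabar]; field_simp [hαp.ne']
    exact mul_div_cancel_right₀ _ (by rw [mul_comm]; exact hαp.ne')
  have hy : C * yabar * (d2 + (1 - q) * σ2) = (b1 - d1) * (d2 + σ2) := by
    rw [hyabar]; field_simp [hαq.ne']
    exact mul_div_cancel_right₀ _ (by rw [mul_comm]; exact hαq.ne')
  -- Condition (I) from hJ : det J < 0
  have hI' : (a1 - d1) * (d2 + (1 - q) * σ2) < (b1 + τ - d1) * (d2 + (1 - p) * σ2) := by
    obtain ⟨lam, hlam, hroot⟩ := hJ
    have h0 : (lam - (b1 + τ - d1 - C * xabar)) * (lam - (-(d2 + σ2)))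
        - q * C * xabar * σ2 = 0 := by
      have h := hroot
      rwa [Polynomial.IsRoot.def, charpoly_eval_fin_two] at h
    have hk : 0 < q * C * xabar * σ2 := by positivity
    have hlamD2 : 0 < lam + (d2 + σ2) := by linarith
    have hm : b1 + τ - d1 - C * xabar < lam := by nlinarith [h0, hk, hlamD2]
    have hdetneg : 0 < (b1 + τ - d1 - C * xabar) * (d2 + σ2) + q * C * xabar * σ2 := by
      nlinarith [h0, mul_pos hlam (show 0 < lam + (d2 + σ2) - (b1 + τ - d1 - C * xabar) by linarith)]
    have h1 : C * xabar * (d2 + (1 - q) * σ2) < (b1 + τ - d1) * (d2 + σ2) := by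
      nlinarith [hdetneg]
    have hx2 : C * xabar * (d2 + (1 - p) * σ2) * (d2 + (1 - q) * σ2)
        = (a1 - d1) * (d2 + σ2) * (d2 + (1 - q) * σ2) := by
      linear_combination (d2 + (1 - q) * σ2) * hx
    have h2 : (a1 - d1) * (d2 + (1 - q) * σ2) * (d2 + σ2)
        < (b1 + τ - d1) * (d2 + (1 - p) * σ2) * (d2 + σ2) := by
      nlinarith [mul_lt_mul_of_pos_right h1 hαp, hx2]
    exact lt_of_mul_lt_mul_right h2 hD2.le
  -- Condition (II) from hJt : det J̃ > 0
  have hII' : (a1 - τ - d1) * (d2 + (1 - q) * σ2) < (b1 - d1) * (d2 + (1 - p) * σ2) := by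
    have hmap : Matrix.map !![a1 - τ - d1 - C * yabar, p * C * yabar; σ2, -(d2 + σ2)]
        Complex.ofReal
        = !![((a1 - τ - d1 - C * yabar : ℝ) : ℂ), ((p * C * yabar : ℝ) : ℂ);
            ((σ2 : ℝ) : ℂ), ((-(d2 + σ2) : ℝ) : ℂ)] := by
      ext i j
      fin_cases i <;> fin_cases j <;> simp [Matrix.map_apply]
    have hdet : 0 < -((a1 - τ - d1 - C * yabar) * (d2 + σ2)) - p * C * yabar * σ2 := by
      by_contra hcon
      push_neg at hcon
      obtain ⟨r, hr0, hr⟩ := neg_det_has_nonneg_root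
        ((a1 - τ - d1 - C * yabar) - (d2 + σ2))
        (-((a1 - τ - d1 - C * yabar) * (d2 + σ2)) - p * C * yabar * σ2) hcon
      have hre : (r - (a1 - τ - d1 - C * yabar)) * (r - (-(d2 + σ2)))
          - (p * C * yabar) * σ2 = 0 := by linear_combination hr
      have hroot : ((Matrix.map !![a1 - τ - d1 - C * yabar, p * C * yabar; σ2, -(d2 + σ2)]
          Complex.ofReal).charpoly).IsRoot (r : ℂ) := by
        rw [hmap, Polynomial.IsRoot.def, charpoly_eval_fin_two]
        exact_mod_cast congrArg (Complex.ofReal) hre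
      have := hJt (r : ℂ) hroot
      rw [Complex.ofReal_re] at this
      linarith
    have h1 : (a1 - τ - d1) * (d2 + σ2) < C * yabar * (d2 + (1 - p) * σ2) := by
      nlinarith [hdet]
    have hy2 : C * yabar * (d2 + (1 - q) * σ2) * (d2 + (1 - p) * σ2)
        = (b1 - d1) * (d2 + σ2) * (d2 + (1 - p) * σ2) := by
      linear_combination (d2 + (1 - p) * σ2) * hy
    have h2 : (a1 - τ - d1) * (d2 + (1 - q) * σ2) * (d2 + σ2)
        < (b1 - d1) * (d2 + (1 - p) * σ2) * (d2 + σ2) := by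
      nlinarith [mul_lt_mul_of_pos_right h1 hαq, hy2]
    exact lt_of_mul_lt_mul_right h2 hD2.le
  have hE1 : (a1 - d1) * (d2 + (1 - q) * σ2) - (b1 - d1) * (d2 + (1 - p) * σ2)
      < τ * (d2 + (1 - p) * σ2) := by nlinarith [hI']
  have hE2 : (a1 - d1) * (d2 + (1 - q) * σ2) - (b1 - d1) * (d2 + (1 - p) * σ2)
      < τ * (d2 + (1 - q) * σ2) := by nlinarith [hII']
  intro xa xd ya yd hxa hxd hya hyd e1 e2 e3 e4
  by_cases hS0 : xa + ya = 0
  · -- trivial equilibrium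
    have hxa0 : xa = 0 := by linarith
    have hya0 : ya = 0 := by linarith
    have hxd0 : (d2 + σ2) * xd = 0 := by
      linear_combination -e2 + p * C * (xa + ya) * hxa0
    have hyd0 : (d2 + σ2) * yd = 0 := by
      linear_combination -e4 + q * C * (xa + ya) * hya0
    left
    simp only [Prod.mk.injEq]
    exact ⟨hxa0, (mul_eq_zero.mp hxd0).resolve_left hD2.ne', hya0,
      (mul_eq_zero.mp hyd0).resolve_left hD2.ne'⟩
  · have hS : 0 < xa + ya := lt_of_le_of_ne (by linarith) (Ne.symm hS0)
    set t := τ * xa * ya / (xa + ya) with htdef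
    have ht : t * (xa + ya) = τ * xa * ya := div_mul_cancel₀ _ hS0
    have e1' : xa * (a1 - d1 - C * (xa + ya)) * (xa + ya) + σ2 * xd * (xa + ya)
        - τ * xa * ya = 0 := by
      linear_combination (xa + ya) * e1 + ht
    have e3' : ya * (b1 - d1 - C * (xa + ya)) * (xa + ya) + σ2 * yd * (xa + ya)
        + τ * xa * ya = 0 := by
      linear_combination (xa + ya) * e3 - ht
    have A' : xa * ((a1 - d1) * (d2 + σ2) * (xa + ya)
        - C * (xa + ya) ^ 2 * (d2 + (1 - p) * σ2) - τ * ya * (d2 + σ2)) = 0 := by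
      linear_combination (d2 + σ2) * e1' + σ2 * (xa + ya) * e2
    have B' : ya * ((b1 - d1) * (d2 + σ2) * (xa + ya)
        - C * (xa + ya) ^ 2 * (d2 + (1 - q) * σ2) + τ * xa * (d2 + σ2)) = 0 := by
      linear_combination (d2 + σ2) * e3' + σ2 * (xa + ya) * e4
    rcases hxa.eq_or_lt with hxa0 | hxap
    · -- xa = 0, so ya > 0 and (ya, yd) = (yabar, ydbar)
      have hxa0' : xa = 0 := hxa0.symm
      subst hxa0'
      have hyap : 0 < ya := by linarith
      have hB : (b1 - d1) * (d2 + σ2) * (0 + ya)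
          - C * (0 + ya) ^ 2 * (d2 + (1 - q) * σ2) + τ * 0 * (d2 + σ2) = 0 :=
        (mul_eq_zero.mp B').resolve_left hyap.ne'
      have hCya : C * ya * (d2 + (1 - q) * σ2) = (b1 - d1) * (d2 + σ2) := by
        refine mul_right_cancel₀ hyap.ne' ?_
        linear_combination -hB
      have hyaeq : ya = yabar := by
        refine mul_right_cancel₀ (show C * (d2 + (1 - q) * σ2) ≠ 0 by positivity) ?_
        calc ya * (C * (d2 + (1 - q) * σ2)) = (b1 - d1) * (d2 + σ2) := by
              linear_combination hCya
          _ = yabar * (C * (d2 + (1 - q) * σ2)) := by linear_combination -hy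
      have hxd0 : (d2 + σ2) * xd = 0 := by linear_combination -e2
      have hyd2 : ydbar = q * C * yabar ^ 2 / (d2 + σ2) := by
        rw [hydbar, hyabar]; field_simp
      have hydeq : yd = ydbar := by
        rw [hyd2, eq_div_iff hD2.ne']
        linear_combination -e4 + q * C * (ya + yabar) * hyaeq
      refine Or.inr (Or.inr ?_)
      simp only [Prod.mk.injEq]
      exact ⟨trivial, (mul_eq_zero.mp hxd0).resolve_left hD2.ne', hyaeq, hydeq⟩
    · rcases hya.eq_or_lt with hya0 | hyap
      · -- ya = 0, so xa > 0 and (xa, xd) = (xabar, xdbar)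
        have hya0' : ya = 0 := hya0.symm
        subst hya0'
        have hA : (a1 - d1) * (d2 + σ2) * (xa + 0)
            - C * (xa + 0) ^ 2 * (d2 + (1 - p) * σ2) - τ * 0 * (d2 + σ2) = 0 :=
          (mul_eq_zero.mp A').resolve_left hxap.ne'
        have hCxa : C * xa * (d2 + (1 - p) * σ2) = (a1 - d1) * (d2 + σ2) := by
          refine mul_right_cancel₀ hxap.ne' ?_
          linear_combination -hA
        have hxaeq : xa = xabar := by
          refine mul_right_cancel₀ (show C * (d2 + (1 - p) * σ2) ≠ 0 by positivity) ?_
          calc xa * (C * (d2 + (1 - p) * σ2)) = (a1 - d1) * (d2 + σ2) := by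
                linear_combination hCxa
            _ = xabar * (C * (d2 + (1 - p) * σ2)) := by linear_combination -hx
        have hyd0 : (d2 + σ2) * yd = 0 := by linear_combination -e4
        have hxd2 : xdbar = p * C * xabar ^ 2 / (d2 + σ2) := by
          rw [hxdbar, hxabar]; field_simp
        have hxdeq : xd = xdbar := by
          rw [hxd2, eq_div_iff hD2.ne']
          linear_combination -e2 + p * C * (xa + xabar) * hxaeq
        refine Or.inr (Or.inl ?_)
        simp only [Prod.mk.injEq]
        exact ⟨hxaeq, hxdeq, trivial, (mul_eq_zero.mp hyd0).resolve_left hD2.ne'⟩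
      · -- coexistence: impossible
        exfalso
        have hA : (a1 - d1) * (d2 + σ2) * (xa + ya)
            - C * (xa + ya) ^ 2 * (d2 + (1 - p) * σ2) - τ * ya * (d2 + σ2) = 0 :=
          (mul_eq_zero.mp A').resolve_left hxap.ne'
        have hB : (b1 - d1) * (d2 + σ2) * (xa + ya)
            - C * (xa + ya) ^ 2 * (d2 + (1 - q) * σ2) + τ * xa * (d2 + σ2) = 0 :=
          (mul_eq_zero.mp B').resolve_left hyap.ne'
        have hcomb : (xa + ya) * ((a1 - d1) * (d2 + (1 - q) * σ2)
            - (b1 - d1) * (d2 + (1 - p) * σ2))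
            = τ * (ya * (d2 + (1 - q) * σ2) + xa * (d2 + (1 - p) * σ2)) := by
          refine mul_right_cancel₀ hD2.ne' ?_
          linear_combination (d2 + (1 - q) * σ2) * hA - (d2 + (1 - p) * σ2) * hB
        linarith [mul_lt_mul_of_pos_left hE1 hxap, mul_lt_mul_of_pos_left hE2 hyap, hcomb]
end

section
/- Assume that every eigenvalue of J̃ has negative real part. Then every complex eigenvalue of the 4×4 real matrix A = [[a1 − d1 − C·ȳₐ − τ, σ2, 0, 0], [p·C·ȳₐ, −d2 − σ2, 0, 0], [−C·ȳₐ + τ, 0, b1 − d1 − 2C·ȳₐ, σ2], [q·C·ȳₐ, 0, 2q·C·ȳₐ, −d2 − σ2]], which is the Jacobian of the four-dimensional competition system at the point (0, 0, ȳₐ, ȳ_d), has strictly negative real part; in particular (0, 0, ȳₐ, ȳ_d) is an asymptotically stable equilibrium. -/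
open Polynomial Matrix

/-- Evaluating the characteristic polynomial at `z` gives `det (z • 1 - M)`. -/
lemma eval_charpoly_det' {n : ℕ} (M : Matrix (Fin n) (Fin n) ℂ) (z : ℂ) :
    (M.charpoly).eval z = (z • (1 : Matrix (Fin n) (Fin n) ℂ) - M).det := by
  rw [Matrix.charpoly, ← Polynomial.coe_evalRingHom, RingHom.map_det]
  congr 1
  ext i j
  by_cases h : i = j <;>
    simp [h, Matrix.charmatrix_apply, Matrix.map_apply, Matrix.smul_apply, Matrix.one_apply,
      Matrix.diagonal_apply]

/-- Routh–Hurwitz for a real monic quadratic: if both coefficients are positive then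
every complex root has negative real part. -/
lemma quad_root_neg' (b c : ℝ) (hb : 0 < b) (hc : 0 < c) (z : ℂ)
    (h : z ^ 2 + (b : ℂ) * z + (c : ℂ) = 0) : z.re < 0 := by
  rw [Complex.ext_iff] at h
  obtain ⟨hre, him⟩ := h
  simp [pow_two, Complex.mul_re, Complex.mul_im] at hre him
  by_contra h0
  push_neg at h0
  have h3 : z.im * (2 * z.re + b) = 0 := by linarith [him]
  rcases mul_eq_zero.mp h3 with hy | hx
  · rw [hy] at hre; nlinarith
  · nlinarith

/-- If every eigenvalue of `J̃` has negative real part, then every eigenvalue of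
the Jacobian `A` of the four-dimensional competition system at `(0, 0, ȳₐ, ȳ_d)`
has strictly negative real part. -/
theorem four_dim_competition_jacobian_stable
    (a1 b1 d1 d2 τ C σ2 p q yabar ydbar : ℝ)
    (hd1 : 0 ≤ d1) (ha1 : d1 < a1) (hb1 : d1 < b1) (hd2 : 0 ≤ d2) (hτ : 0 ≤ τ)
    (hC : 0 < C) (hσ2 : 0 < σ2)
    (hp0 : 0 < p) (hp1 : p < 1) (hq0 : 0 < q) (hq1 : q < 1)
    (hyabar : yabar = (b1 - d1) * (d2 + σ2) / (C * (d2 + (1 - q) * σ2)))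
    (hydbar : ydbar = q * (b1 - d1) ^ 2 * (d2 + σ2) / (C * (d2 + (1 - q) * σ2) ^ 2))
    (hJt : ∀ z : ℂ,
      ((Matrix.map !![a1 - τ - d1 - C * yabar, p * C * yabar; σ2, -(d2 + σ2)]
        Complex.ofReal).charpoly).IsRoot z → z.re < 0)
    (A : Matrix (Fin 4) (Fin 4) ℝ)
    (hA : A = !![a1 - d1 - C * yabar - τ, σ2, 0, 0;
                 p * C * yabar, -d2 - σ2, 0, 0;
                 -C * yabar + τ, 0, b1 - d1 - 2 * C * yabar, σ2;
                 q * C * yabar, 0, 2 * q * C * yabar, -d2 - σ2]) :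
    ∀ z : ℂ, ((A.map Complex.ofReal).charpoly).IsRoot z → z.re < 0 := by
  intro z hz
  have hu : 0 < d2 + (1 - q) * σ2 := by nlinarith
  have hs : 0 < d2 + σ2 := by nlinarith
  have hβ : 0 < b1 - d1 := by linarith
  have hy : yabar * (C * (d2 + (1 - q) * σ2)) = (b1 - d1) * (d2 + σ2) := by
    rw [hyabar]; field_simp; exact div_self (ne_of_gt (by nlinarith))
  -- the two quadratic factors
  have hc2 : -((b1 - d1 - 2 * C * yabar) * (d2 + σ2)) - σ2 * (2 * q * C * yabar)
      = (b1 - d1) * (d2 + σ2) := by linear_combination 2 * hy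
  have hc2pos : 0 < -((b1 - d1 - 2 * C * yabar) * (d2 + σ2)) - σ2 * (2 * q * C * yabar) := by
    rw [hc2]; positivity
  have hb2key : ((d2 + σ2) - (b1 - d1 - 2 * C * yabar)) * (d2 + (1 - q) * σ2)
      = (d2 + σ2) * (d2 + (1 - q) * σ2) + (b1 - d1) * (d2 + (1 + q) * σ2) := by
    linear_combination 2 * hy
  have hb2pos : 0 < (d2 + σ2) - (b1 - d1 - 2 * C * yabar) := by
    nlinarith [mul_pos hs hu, mul_pos hβ hσ2, mul_pos (mul_pos hβ hq0) hσ2,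
      mul_pos hβ hs]
  -- factor the characteristic polynomial (block lower triangular structure)
  have hfac : ((A.map Complex.ofReal).charpoly).eval z =
      (z ^ 2 + ((d2 + σ2) - (a1 - d1 - C * yabar - τ) : ℝ) * z +
        (-((a1 - d1 - C * yabar - τ) * (d2 + σ2)) - σ2 * (p * C * yabar) : ℝ)) *
      (z ^ 2 + ((d2 + σ2) - (b1 - d1 - 2 * C * yabar) : ℝ) * z +
        (-((b1 - d1 - 2 * C * yabar) * (d2 + σ2)) - σ2 * (2 * q * C * yabar) : ℝ)) := by
    rw [eval_charpoly_det']
    have hM : z • (1 : Matrix (Fin 4) (Fin 4) ℂ) - A.map Complex.ofReal =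
        !![z - (a1 - d1 - C * yabar - τ : ℝ), -(σ2 : ℝ), 0, 0;
           -(p * C * yabar : ℝ), z - (-d2 - σ2 : ℝ), 0, 0;
           -(-C * yabar + τ : ℝ), 0, z - (b1 - d1 - 2 * C * yabar : ℝ), -(σ2 : ℝ);
           -(q * C * yabar : ℝ), 0, -(2 * q * C * yabar : ℝ), z - (-d2 - σ2 : ℝ)] := by
      rw [hA]
      ext i j
      fin_cases i <;> fin_cases j <;>
        simp [Matrix.smul_apply, Matrix.one_apply, Matrix.map_apply, Matrix.vecHead,
          Matrix.vecTail]
    rw [hM]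
    simp [Matrix.det_succ_row_zero, Fin.sum_univ_succ, Fin.succAbove,
      Matrix.vecHead, Matrix.vecTail]
    push_cast
    ring
  rw [Polynomial.IsRoot] at hz
  rw [hfac] at hz
  rcases mul_eq_zero.mp hz with h1 | h2
  · -- root of the J̃ factor
    apply hJt z
    rw [Polynomial.IsRoot, eval_charpoly_det']
    have hM2 : z • (1 : Matrix (Fin 2) (Fin 2) ℂ) -
        Matrix.map !![a1 - τ - d1 - C * yabar, p * C * yabar; σ2, -(d2 + σ2)] Complex.ofReal =
        !![z - (a1 - τ - d1 - C * yabar : ℝ), -(p * C * yabar : ℝ);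
           -(σ2 : ℝ), z - (-(d2 + σ2) : ℝ)] := by
      ext i j
      fin_cases i <;> fin_cases j <;>
        simp [Matrix.smul_apply, Matrix.one_apply, Matrix.map_apply, Matrix.vecHead,
          Matrix.vecTail]
    rw [hM2, Matrix.det_fin_two_of]
    push_cast at h1 ⊢
    linear_combination h1
  · exact quad_root_neg' _ _ hb2pos hc2pos z h2
end

section
/- Fix b1 > d1 ≥ 0, d2 ≥ 0, σ2 > 0, C > 0 and q ∈ (0, 1), and set ȳₐ = (b1 − d1)(d2 + σ2)/(C(d2 + (1 − q)σ2)). Then the matrix B = [[b1 − d1 − 2C·ȳₐ, σ2], [2q·C·ȳₐ, −(d2 + σ2)]] satisfies det(B) = (d2 + σ2)(b1 − d1) > 0 and trace(B) < 0, and consequently every eigenvalue of B has strictly negative real part. -/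
lemma charpoly_fin_two_root {a b c d : ℝ} {z : ℂ}
    (h : (Matrix.charpoly ((!![a, b; c, d] : Matrix (Fin 2) (Fin 2) ℝ).map
      Complex.ofReal)).IsRoot z) :
    (z - a) * (z - d) - b * c = 0 := by
  have hmap : (!![a, b; c, d] : Matrix (Fin 2) (Fin 2) ℝ).map Complex.ofReal
      = !![(a:ℂ), b; c, d] := by
    ext i j; fin_cases i <;> fin_cases j <;> simp
  rw [hmap] at h
  have hch : Matrix.charmatrix (!![(a:ℂ), b; c, d]) =
      !![Polynomial.X - Polynomial.C (a:ℂ), -Polynomial.C (b:ℂ);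
         -Polynomial.C (c:ℂ), Polynomial.X - Polynomial.C (d:ℂ)] := by
    ext i j; fin_cases i <;> fin_cases j <;>
      simp [Matrix.charmatrix_apply_eq, Matrix.charmatrix_apply_ne]
  have : Matrix.charpoly (!![(a:ℂ), b; c, d]) =
      (Polynomial.X - Polynomial.C (a:ℂ)) * (Polynomial.X - Polynomial.C (d:ℂ))
        - Polynomial.C (b:ℂ) * Polynomial.C (c:ℂ) := by
    rw [Matrix.charpoly, hch, Matrix.det_fin_two_of]; ring
  rw [this] at h
  simpa [Polynomial.IsRoot, sub_eq_zero] using h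

lemma quad_root_neg_re {T D : ℝ} (hT : T < 0) (hD : 0 < D) {z : ℂ}
    (h : z ^ 2 - (T : ℂ) * z + (D : ℂ) = 0) : z.re < 0 := by
  set x := z.re with hx
  set y := z.im with hy
  have hre : x ^ 2 - y ^ 2 - T * x + D = 0 := by
    have := congrArg Complex.re h
    simp [Complex.add_re, Complex.sub_re, Complex.mul_re, pow_two] at this
    nlinarith [this]
  have him : y * (2 * x - T) = 0 := by
    have := congrArg Complex.im h
    simp [Complex.add_im, Complex.sub_im, Complex.mul_im, pow_two] at this
    nlinarith [this]
  rcases mul_eq_zero.mp him with hy0 | hxT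
  · -- real eigenvalue
    by_contra hx0
    push_neg at hx0
    nlinarith
  · -- complex pair: x = T/2 < 0
    nlinarith

/-- The lower-right block `B = [[b1 − d1 − 2C·ȳₐ, σ2], [2q·C·ȳₐ, −(d2+σ2)]]`
of the Jacobian at `(0, 0, ȳₐ, ȳ_d)` has determinant `(d2+σ2)(b1−d1) > 0` and
negative trace, so every eigenvalue of `B` has strictly negative real part. -/
theorem jacobian_block_stable
    (b1 d1 d2 σ2 C q yabar : ℝ)
    (hd1 : 0 ≤ d1) (hb1 : d1 < b1) (hd2 : 0 ≤ d2)
    (hσ2 : 0 < σ2) (hC : 0 < C) (hq0 : 0 < q) (hq1 : q < 1)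
    (hyabar : yabar = (b1 - d1) * (d2 + σ2) / (C * (d2 + (1 - q) * σ2)))
    (B : Matrix (Fin 2) (Fin 2) ℝ)
    (hB : B = !![b1 - d1 - 2 * C * yabar, σ2; 2 * q * C * yabar, -(d2 + σ2)]) :
    B.det = (d2 + σ2) * (b1 - d1) ∧ 0 < B.det ∧ B.trace < 0 ∧
    (∀ z : ℂ, ((B.map Complex.ofReal).charpoly).IsRoot z → z.re < 0) := by
  have hden : 0 < d2 + (1 - q) * σ2 := by nlinarith
  have hCy : C * yabar = (b1 - d1) * (d2 + σ2) / (d2 + (1 - q) * σ2) := by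
    rw [hyabar]; field_simp
  have hdet : B.det = (d2 + σ2) * (b1 - d1) := by
    rw [hB, Matrix.det_fin_two_of]
    have : yabar * (d2 + (1 - q) * σ2) = (b1 - d1) * (d2 + σ2) / C := by
      rw [hyabar, div_mul_eq_mul_div, div_eq_div_iff (mul_pos hC hden).ne' hC.ne']; ring
    field_simp at this ⊢
    nlinarith [this]
  have hdetpos : 0 < B.det := by rw [hdet]; nlinarith
  have hCy' : b1 - d1 < 2 * C * yabar := by
    rw [show 2 * C * yabar = 2 * (C * yabar) by ring, hCy, ← mul_div_assoc,
      lt_div_iff₀ hden]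
    nlinarith [mul_pos (sub_pos.mpr hb1) (show (0:ℝ) < d2 + (1 + q) * σ2 by nlinarith)]
  have htr : B.trace = b1 - d1 - 2 * C * yabar + -(d2 + σ2) := by
    rw [hB, Matrix.trace_fin_two_of]
  have htrneg : B.trace < 0 := by rw [htr]; nlinarith
  refine ⟨hdet, hdetpos, htrneg, ?_⟩
  intro z hz
  rw [hB] at hz
  have hroot := charpoly_fin_two_root hz
  have hquad : z ^ 2 - (B.trace : ℂ) * z + (B.det : ℂ) = 0 := by
    rw [htr, hdet]
    have hd : ((d2 + σ2) * (b1 - d1) : ℝ) =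
        (b1 - d1 - 2 * C * yabar) * (-(d2 + σ2)) - σ2 * (2 * q * C * yabar) := by
      rw [← hdet, hB, Matrix.det_fin_two_of]
    have hdc := congrArg (Complex.ofReal) hd
    push_cast at hdc hroot ⊢
    linear_combination hroot + hdc
  exact quad_root_neg_re htrneg hdetpos hquad
end

section
/- Assume λ > 0 is an eigenvalue of J admitting a left eigenvector (πₐ, π_d) with πₐ > 0, π_d > 0 and πₐ + π_d = 1. Then for every A > 0 there exists ε₀ > 0 such that for all 0 < ε ≤ ε₀ and all real numbers xₐ, yₐ, y_d with |xₐ − x̄ₐ| ≤ A·√ε, yₐ > 0, y_d > 0, yₐ + y_d < √ε and y_d/yₐ = π_d/πₐ, the inequalities q·C·(xₐ + yₐ)/(d2 + σ2) > y_d/yₐ > (d1 − b1 + C(xₐ + yₐ) − τ·xₐ/(xₐ + yₐ))/σ2 hold. -/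
private lemma auxK (L lam s a b c : ℝ) (hs : 0 < s) (ha : 0 ≤ a) (hb : 0 ≤ b) (hc : 0 ≤ c)
    (hL : L ≤ lam) (h : s * (a + b + c + 1) ≤ L) :
    a * s < L ∧ (b + c) * s < lam := by
  constructor <;>
    nlinarith [mul_nonneg hs.le ha, mul_nonneg hs.le hb, mul_nonneg hs.le hc]

private lemma aux1 (q C πa πd d2 σ2 lam xabar xa ya s A : ℝ)
    (heig2 : πa * (q * C * xabar) + πd * (-(d2 + σ2)) = lam * πd)
    (hp1' : q * C * πa * (xabar - A * s) ≤ q * C * πa * xa)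
    (hp2' : 0 < q * C * πa * ya)
    (hqCAs : q * C * A * s * πa < lam * πd) :
    πd * (d2 + σ2) < q * C * (xa + ya) * πa := by nlinarith

private lemma aux2 (b1 d1 τ C xabar lam πa πd σ2 S t : ℝ)
    (heig1 : πa * (b1 + τ - d1 - C * xabar) + πd * σ2 = lam * πa)
    (hfin : (C * S + (τ - t)) * πa < (lam + C * xabar) * πa) :
    (d1 - b1 + C * S - t) * πa < πd * σ2 := by nlinarith

private lemma aux3 (C S xb A1 s u v lam : ℝ)
    (h4 : u ≤ v * s) (e2 : (C * A1 + v) * s < lam)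
    (hCS : C * (S - xb) ≤ C * (A1 * s)) :
    C * S + u < lam + C * xb := by nlinarith

/-- If `λ > 0` is an eigenvalue of `J` with positive normalized left eigenvector
`(πₐ, π_d)`, then for every `A > 0` and all sufficiently small `ε > 0`, any
configuration with `|xₐ − x̄ₐ| ≤ A√ε`, `yₐ, y_d > 0`, `yₐ + y_d < √ε` and
`y_d/yₐ = π_d/πₐ` satisfies the invasion criterion. -/
theorem good_initial_condition_invading
    (a1 b1 d1 d2 τ C σ2 p q xabar lam πa πd : ℝ)
    (hd1 : 0 ≤ d1) (ha1 : d1 < a1) (hb1 : d1 < b1) (hd2 : 0 ≤ d2) (hτ : 0 ≤ τ)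
    (hC : 0 < C) (hσ2 : 0 < σ2)
    (hp0 : 0 < p) (hp1 : p < 1) (hq0 : 0 < q) (hq1 : q < 1)
    (hxabar : xabar = (a1 - d1) * (d2 + σ2) / (C * (d2 + (1 - p) * σ2)))
    (hlam : 0 < lam)
    (hπa : 0 < πa) (hπd : 0 < πd) (hsum : πa + πd = 1)
    (heig1 : πa * (b1 + τ - d1 - C * xabar) + πd * σ2 = lam * πa)
    (heig2 : πa * (q * C * xabar) + πd * (-(d2 + σ2)) = lam * πd) :
    ∀ A : ℝ, 0 < A → ∃ ε₀ : ℝ, 0 < ε₀ ∧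
      ∀ ε : ℝ, 0 < ε → ε ≤ ε₀ →
        ∀ xa ya yd : ℝ,
          |xa - xabar| ≤ A * Real.sqrt ε →
          0 < ya → 0 < yd → ya + yd < Real.sqrt ε →
          yd / ya = πd / πa →
          yd / ya < q * C * (xa + ya) / (d2 + σ2) ∧
          (d1 - b1 + C * (xa + ya) - τ * xa / (xa + ya)) / σ2 < yd / ya := by
  intro A hA
  have hden : (0:ℝ) < C * (d2 + (1 - p) * σ2) := by
    have h : (0:ℝ) < d2 + (1 - p) * σ2 := by nlinarith [mul_pos hσ2 (sub_pos.mpr hp1)]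
    exact mul_pos hC h
  have hx0 : 0 < xabar := by
    rw [hxabar]; exact div_pos (by nlinarith) hden
  have hL : 0 < min (πd / πa * lam) lam := lt_min (by positivity) hlam
  set L := min (πd / πa * lam) lam with hLdef
  have hK : 0 < q * C * A + C * (A + 1) + 2 * τ / xabar + 1 := by positivity
  set K := q * C * A + C * (A + 1) + 2 * τ / xabar + 1 with hKdef
  have hm0 : 0 < min (L / K) (xabar / (2 * A)) := lt_min (by positivity) (by positivity)
  set m := min (L / K) (xabar / (2 * A)) with hmdef
  refine ⟨m ^ 2, by positivity, ?_⟩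
  intro ε hε hεle xa ya yd hxa hya hyd hsmall hratio
  set s := Real.sqrt ε with hsdef
  have hs0 : 0 < s := Real.sqrt_pos.mpr hε
  have hsm : s ≤ m := by
    calc s ≤ Real.sqrt (m ^ 2) := Real.sqrt_le_sqrt hεle
    _ = m := by rw [Real.sqrt_sq hm0.le]
  have hs1 : s ≤ L / K := hsm.trans (min_le_left _ _)
  have hs2 : s ≤ xabar / (2 * A) := hsm.trans (min_le_right _ _)
  have hsK : s * (q * C * A + C * (A + 1) + 2 * τ / xabar + 1) ≤ L := by
    have h := (le_div_iff₀ hK).mp hs1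
    rw [hKdef] at h; exact h
  have hLlam : L ≤ lam := min_le_right _ _
  obtain ⟨e1, e2⟩ := auxK L lam s (q * C * A) (C * (A + 1)) (2 * τ / xabar) hs0
    (by positivity) (by positivity) (by positivity) hLlam hsK
  have hLr : L * πa ≤ lam * πd := by
    have h1 : L ≤ πd / πa * lam := min_le_left _ _
    have h2 : (πd / πa * lam) * πa = lam * πd := by field_simp
    calc L * πa ≤ (πd / πa * lam) * πa := mul_le_mul_of_nonneg_right h1 hπa.le
    _ = lam * πd := h2
  have hAs : A * s ≤ xabar / 2 := by
    rw [le_div_iff₀ (by positivity : (0:ℝ) < 2 * A)] at hs2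
    linarith
  have hxa' := abs_le.mp hxa
  have hxlo : xabar - A * s ≤ xa := by linarith [hxa'.1]
  have hxhi : xa ≤ xabar + A * s := by linarith [hxa'.2]
  have hya_lt : ya < s := by linarith
  have hS : xabar / 2 < xa + ya := by linarith
  have hSpos : 0 < xa + ya := by linarith
  constructor
  · rw [hratio, div_lt_div_iff₀ hπa (by positivity : (0:ℝ) < d2 + σ2)]
    have hqCAs : q * C * A * s * πa < lam * πd :=
      lt_of_lt_of_le (mul_lt_mul_of_pos_right e1 hπa) hLr
    have hc : (0:ℝ) ≤ q * C * πa := by positivity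
    exact aux1 q C πa πd d2 σ2 lam xabar xa ya s A heig2
      (mul_le_mul_of_nonneg_left hxlo hc) (by positivity) hqCAs
  · rw [hratio, div_lt_div_iff₀ hσ2 hπa]
    set t := τ * xa / (xa + ya) with htdef
    have ht : t * (xa + ya) = τ * xa := div_mul_cancel₀ _ hSpos.ne'
    have h1 : (τ - t) * (xa + ya) = τ * ya := by linear_combination -ht
    have h2 : 0 ≤ τ - t := by
      have hle : t ≤ τ := by
        rw [htdef, div_le_iff₀ hSpos]
        exact mul_le_mul_of_nonneg_left (by linarith) hτ
      linarith
    have h3 : (τ - t) * (xabar / 2) ≤ τ * s := by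
      calc (τ - t) * (xabar / 2) ≤ (τ - t) * (xa + ya) :=
            mul_le_mul_of_nonneg_left hS.le h2
      _ = τ * ya := h1
      _ ≤ τ * s := mul_le_mul_of_nonneg_left hya_lt.le hτ
    have h4 : τ - t ≤ (2 * τ / xabar) * s := by
      have hw : (0:ℝ) < xabar / 2 := by linarith
      have hc : (τ - t) * (xabar / 2) ≤ ((2 * τ / xabar) * s) * (xabar / 2) := by
        calc (τ - t) * (xabar / 2) ≤ τ * s := h3
        _ = ((2 * τ / xabar) * s) * (xabar / 2) := by field_simp
      exact le_of_mul_le_mul_right hc hw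
    have hCS : C * ((xa + ya) - xabar) ≤ C * ((A + 1) * s) :=
      mul_le_mul_of_nonneg_left (by linarith) hC.le
    have hkey : C * (xa + ya) + (τ - t) < lam + C * xabar :=
      aux3 C (xa + ya) xabar (A + 1) s (τ - t) (2 * τ / xabar) lam h4 e2 hCS
    exact aux2 b1 d1 τ C xabar lam πa πd σ2 (xa + ya) t heig1
      (mul_lt_mul_of_pos_right hkey hπa)
end

section
/- Assume λ > 0 is an eigenvalue of J̃ admitting a left eigenvector (πₐ, π_d) with πₐ > 0, π_d > 0 and πₐ + π_d = 1. Then for every A > 0 there exists ε₀ > 0 such that for all 0 < ε ≤ ε₀ and all real numbers yₐ, xₐ, x_d with |yₐ − ȳₐ| ≤ A·√ε, xₐ > 0, x_d > 0, xₐ + x_d < √ε and x_d/xₐ = π_d/πₐ, the inequalities p·C·(xₐ + yₐ)/(d2 + σ2) > x_d/xₐ > (d1 − a1 + C(xₐ + yₐ) + τ·yₐ/(xₐ + yₐ))/σ2 hold. -/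
set_option maxHeartbeats 1000000


/-- If `λ > 0` is an eigenvalue of `J̃` with positive normalized left eigenvector
`(πₐ, π_d)`, then for every `A > 0` and all sufficiently small `ε > 0`, any
configuration with `|yₐ − ȳₐ| ≤ A√ε`, `xₐ, x_d > 0`, `xₐ + x_d < √ε` and
`x_d/xₐ = π_d/πₐ` satisfies the (reverse) invasion criterion. -/
theorem good_initial_condition_invading_reverse
    (a1 b1 d1 d2 τ C σ2 p q yabar lam πa πd : ℝ)
    (hd1 : 0 ≤ d1) (ha1 : d1 < a1) (hb1 : d1 < b1) (hd2 : 0 ≤ d2) (hτ : 0 ≤ τ)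
    (hC : 0 < C) (hσ2 : 0 < σ2)
    (hp0 : 0 < p) (hp1 : p < 1) (hq0 : 0 < q) (hq1 : q < 1)
    (hyabar : yabar = (b1 - d1) * (d2 + σ2) / (C * (d2 + (1 - q) * σ2)))
    (hlam : 0 < lam)
    (hπa : 0 < πa) (hπd : 0 < πd) (hsum : πa + πd = 1)
    (heig1 : πa * (a1 - τ - d1 - C * yabar) + πd * σ2 = lam * πa)
    (heig2 : πa * (p * C * yabar) + πd * (-(d2 + σ2)) = lam * πd) :
    ∀ A : ℝ, 0 < A → ∃ ε₀ : ℝ, 0 < ε₀ ∧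
      ∀ ε : ℝ, 0 < ε → ε ≤ ε₀ →
        ∀ ya xa xd : ℝ,
          |ya - yabar| ≤ A * Real.sqrt ε →
          0 < xa → 0 < xd → xa + xd < Real.sqrt ε →
          xd / xa = πd / πa →
          xd / xa < p * C * (xa + ya) / (d2 + σ2) ∧
          (d1 - a1 + C * (xa + ya) + τ * ya / (xa + ya)) / σ2 < xd / xa := by
  intro A hA
  have hds : 0 < d2 + σ2 := by linarith
  have hyabar_pos : 0 < yabar := by
    rw [hyabar]
    apply div_pos
    · nlinarith
    · have h1 : 0 < (1 - q) * σ2 := mul_pos (by linarith) hσ2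
      nlinarith
  have hlds : 0 < lam + d2 + σ2 := by linarith
  set B1 : ℝ := lam / (C * (1 + A)) with hB1
  set B2 : ℝ := yabar * lam / (A * (lam + d2 + σ2)) with hB2
  have hB1pos : 0 < B1 := div_pos hlam (by nlinarith)
  have hB2pos : 0 < B2 := div_pos (mul_pos hyabar_pos hlam) (by positivity)
  set δ : ℝ := min B1 B2 with hδ
  have hδpos : 0 < δ := lt_min hB1pos hB2pos
  refine ⟨(δ / 2) ^ 2, by positivity, ?_⟩
  intro ε hε hεle ya xa xd hya hxa hxd hsum2 hratio
  set s := Real.sqrt ε with hs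
  have hspos : 0 < s := Real.sqrt_pos.mpr hε
  have hsle : s ≤ δ / 2 := by
    calc s ≤ Real.sqrt ((δ / 2) ^ 2) := Real.sqrt_le_sqrt hεle
    _ = δ / 2 := by
        rw [Real.sqrt_sq (by positivity)]
  have hsB1 : s < B1 := lt_of_le_of_lt hsle (by
    have := min_le_left B1 B2
    simp only [hδ] at *
    linarith [lt_min_iff.mp hδpos])
  have hsB2 : s < B2 := by
    have h := min_le_right B1 B2
    have : δ / 2 < B2 := by
      have : δ ≤ B2 := h
      linarith
    linarith
  -- key smallness facts
  have hCs : C * (1 + A) * s < lam := by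
    rw [hB1, lt_div_iff₀ (by nlinarith)] at hsB1
    linarith [hsB1]
  have hAs : A * s * (lam + d2 + σ2) < yabar * lam := by
    rw [hB2, lt_div_iff₀ (by positivity)] at hsB2
    linarith [hsB2]
  have habs := abs_le.mp hya
  have hyalow : yabar - A * s ≤ ya := by linarith [habs.1]
  have hyahigh : ya ≤ yabar + A * s := by linarith [habs.2]
  have hAsyabar : A * s < yabar := by
    have h2 : yabar * lam ≤ yabar * (lam + d2 + σ2) := by
      nlinarith [mul_nonneg hyabar_pos.le hds.le]
    exact (mul_lt_mul_iff_of_pos_right hlds).mp (by linarith)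
  have hya_pos : 0 < ya := by linarith
  have hS : 0 < xa + ya := by linarith
  have hxas : xa < s := by linarith
  -- eigen rearrangements
  have heig2' : πa * (p * C * yabar) = (lam + d2 + σ2) * πd := by linarith
  have heig1' : πd * σ2 = πa * (lam + τ + d1 - a1 + C * yabar) := by nlinarith [heig1]
  rw [hratio]
  constructor
  · rw [div_lt_div_iff₀ hπa hds]
    -- need πd * (d2 + σ2) < p*C*(xa+ya) * πa
    have hpc : 0 < πa * (p * C) := by positivity
    have hA1 : πa * (p * C) * (A * s * (lam + d2 + σ2)) < πa * (p * C) * (yabar * lam) :=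
      mul_lt_mul_of_pos_left hAs hpc
    have heq : πa * (p * C) * (yabar * lam) = ((lam + d2 + σ2) * πd) * lam := by
      linear_combination lam * heig2'
    have h1' : (πa * (p * C) * (A * s)) * (lam + d2 + σ2) < (lam * πd) * (lam + d2 + σ2) := by
      linarith only [hA1, heq]
    have h2 : πa * (p * C) * (A * s) < lam * πd := (mul_lt_mul_iff_of_pos_right hlds).mp h1'
    have h3 : πa * (p * C) * (yabar - A * s) ≤ πa * (p * C) * (xa + ya) :=
      mul_le_mul_of_nonneg_left (by linarith) hpc.le
    linarith only [h2, h3, heig2']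
  · rw [div_lt_div_iff₀ hσ2 hπa]
    have ht : τ * ya / (xa + ya) ≤ τ := by
      rw [div_le_iff₀ hS]
      exact mul_le_mul_of_nonneg_left (by linarith) hτ
    have hCS : C * (xa + ya - yabar) < lam := by
      have hx : xa + ya - yabar < s + A * s := by linarith
      have := mul_lt_mul_of_pos_left hx hC
      linarith only [this, hCs]
    have hbr : d1 - a1 + C * (xa + ya) + τ * ya / (xa + ya)
        < lam + τ + d1 - a1 + C * yabar := by linarith [hCS, ht]
    have hfin := mul_lt_mul_of_pos_right hbr hπa
    linarith only [hfin, heig1']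
end

section
/- Assume b1 − τ − d1 − C·x̄ₐ > 0 and −(a1 + τ − d1 − C·ȳ) > σ2·p·C·ȳ/(d2 + σ2). Then for every A > 0 there exists ε₀ ∈ (0, 1] such that for all 0 < ε ≤ ε₀ the following holds: every differentiable solution (xₐ, x_d, y) : [0, ∞) → ℝ³ of the three-dimensional competition system with reversed transfer, with all coordinates nonnegative, with y(t) > 0 and xₐ(t) + y(t) > 0 for all t ≥ 0, and with initial value in 𝒜_ε, converges to (0, 0, ȳ) as t → ∞. -/
open Filter Set Real

section helpers

lemma slope_neg_right {f : ℝ → ℝ} {f' T : ℝ} (hf : HasDerivAt f f' T) (h0 : f T = 0)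
    (hneg : f' < 0) : ∀ᶠ t in nhdsWithin T (Set.Ioi T), f t < 0 := by
  have hs : Filter.Tendsto (slope f T) (nhdsWithin T (Set.Ioi T)) (nhds f') :=
    (hasDerivAt_iff_tendsto_slope.1 hf).mono_left
      (nhdsWithin_mono T (fun x hx => ne_of_gt hx))
  have h1 : ∀ᶠ t in nhdsWithin T (Set.Ioi T), slope f T t < 0 :=
    hs.eventually_lt_const hneg
  filter_upwards [h1, self_mem_nhdsWithin] with t ht (ht2 : t ∈ Set.Ioi T)
  have hT : (0:ℝ) < t - T := by simpa using sub_pos.2 (Set.mem_Ioi.1 ht2)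
  have : slope f T t * (t - T) = f t - f T := by
    rw [slope_def_field]; field_simp
  nlinarith [mul_neg_of_neg_of_pos ht hT]

lemma stay_nonpos3 (f1 f2 f3 g1 g2 g3 : ℝ → ℝ) (t0 : ℝ)
    (hd1 : ∀ t, t0 ≤ t → HasDerivAt f1 (g1 t) t)
    (hd2 : ∀ t, t0 ≤ t → HasDerivAt f2 (g2 t) t)
    (hd3 : ∀ t, t0 ≤ t → HasDerivAt f3 (g3 t) t)
    (h01 : f1 t0 ≤ 0) (h02 : f2 t0 ≤ 0) (h03 : f3 t0 ≤ 0)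
    (hb1 : ∀ t, t0 ≤ t → f1 t ≤ 0 → f2 t ≤ 0 → f3 t ≤ 0 → f1 t = 0 → g1 t < 0)
    (hb2 : ∀ t, t0 ≤ t → f1 t ≤ 0 → f2 t ≤ 0 → f3 t ≤ 0 → f2 t = 0 → g2 t < 0)
    (hb3 : ∀ t, t0 ≤ t → f1 t ≤ 0 → f2 t ≤ 0 → f3 t ≤ 0 → f3 t = 0 → g3 t < 0) :
    ∀ t, t0 ≤ t → f1 t ≤ 0 ∧ f2 t ≤ 0 ∧ f3 t ≤ 0 := by
  intro t1 ht1
  by_contra hcon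
  have hS : IsClosed {t : ℝ | t ∈ Set.Icc t0 t1 ∧ f1 t ≤ 0 ∧ f2 t ≤ 0 ∧ f3 t ≤ 0} := by
    have hc : ∀ (f g : ℝ → ℝ), (∀ t, t0 ≤ t → HasDerivAt f (g t) t) →
        ContinuousOn f (Set.Icc t0 t1) := by
      intro f g hd
      intro x hx
      exact ((hd x hx.1).continuousAt).continuousWithinAt
    have : {t : ℝ | t ∈ Set.Icc t0 t1 ∧ f1 t ≤ 0 ∧ f2 t ≤ 0 ∧ f3 t ≤ 0}
        = (Set.Icc t0 t1 ∩ f1 ⁻¹' (Set.Iic 0)) ∩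
          ((Set.Icc t0 t1 ∩ f2 ⁻¹' (Set.Iic 0)) ∩ (Set.Icc t0 t1 ∩ f3 ⁻¹' (Set.Iic 0))) := by
      ext t; simp [Set.mem_Icc, and_assoc]; tauto
    rw [this]
    exact (((hc f1 g1 hd1).preimage_isClosed_of_isClosed isClosed_Icc isClosed_Iic)).inter
      ((((hc f2 g2 hd2).preimage_isClosed_of_isClosed isClosed_Icc isClosed_Iic)).inter
        (((hc f3 g3 hd3).preimage_isClosed_of_isClosed isClosed_Icc isClosed_Iic)))
  set S := {t : ℝ | t ∈ Set.Icc t0 t1 ∧ f1 t ≤ 0 ∧ f2 t ≤ 0 ∧ f3 t ≤ 0} with hSdef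
  have hne : S.Nonempty := ⟨t0, ⟨le_refl _, ht1⟩, h01, h02, h03⟩
  have hbdd : BddAbove S := ⟨t1, fun x hx => hx.1.2⟩
  set T := sSup S with hT
  have hTS : T ∈ S := hS.csSup_mem hne hbdd
  have hTt0 : t0 ≤ T := hTS.1.1
  have hTt1 : T ≤ t1 := hTS.1.2
  have hTne : T ≠ t1 := by
    intro h; exact hcon (by rw [← h]; exact hTS.2)
  have hTlt : T < t1 := lt_of_le_of_ne hTt1 hTne
  -- each f_i is eventually negative to the right of T
  have hev : ∀ (f g : ℝ → ℝ), (∀ t, t0 ≤ t → HasDerivAt f (g t) t) →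
      f T ≤ 0 → (f T = 0 → g T < 0) →
      ∀ᶠ t in nhdsWithin T (Set.Ioi T), f t < 0 := by
    intro f g hd hle hb
    rcases lt_or_eq_of_le hle with h | h'
    · have : ∀ᶠ t in nhds T, f t < 0 :=
        ((hd T hTt0).continuousAt).eventually_lt_const h
      exact this.filter_mono nhdsWithin_le_nhds
    · have h : f T = 0 := h'
      exact slope_neg_right (hd T hTt0) h (hb h)
  have e1 := hev f1 g1 hd1 hTS.2.1 (hb1 T hTt0 hTS.2.1 hTS.2.2.1 hTS.2.2.2)
  have e2 := hev f2 g2 hd2 hTS.2.2.1 (hb2 T hTt0 hTS.2.1 hTS.2.2.1 hTS.2.2.2)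
  have e3 := hev f3 g3 hd3 hTS.2.2.2 (hb3 T hTt0 hTS.2.1 hTS.2.2.1 hTS.2.2.2)
  have hIoo : Set.Ioo T t1 ∈ nhdsWithin T (Set.Ioi T) :=
    Ioo_mem_nhdsGT_of_mem ⟨le_refl T, hTlt⟩
  have : ∀ᶠ t in nhdsWithin T (Set.Ioi T),
      f1 t < 0 ∧ f2 t < 0 ∧ f3 t < 0 ∧ t ∈ Set.Ioo T t1 :=
    e1.and (e2.and (e3.and hIoo))
  obtain ⟨t, h1, h2, h3, h4⟩ := this.exists
  have htS : t ∈ S := ⟨⟨le_trans hTt0 h4.1.le, h4.2.le⟩, h1.le, h2.le, h3.le⟩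
  exact absurd (le_csSup hbdd htS) (not_le.2 h4.1)

lemma le_of_deriv_le (f g : ℝ → ℝ) (T m : ℝ)
    (hd : ∀ t, T ≤ t → HasDerivAt f (g t) t) (hm : ∀ t, T ≤ t → g t ≤ m) :
    ∀ t, T ≤ t → f t ≤ f T + m * (t - T) := by
  intro t ht
  set φ : ℝ → ℝ := fun s => f T + m * (s - T) - f s with hφdef
  have hφd : ∀ s, T ≤ s → HasDerivAt φ (m - g s) s := by
    intro s hs
    have h1 : HasDerivAt (fun s : ℝ => f T + m * (s - T)) m s := by
      simpa using (((hasDerivAt_id s).sub_const T).const_mul m).const_add (f T)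
    exact h1.sub (hd s hs)
  have hmono : MonotoneOn φ (Set.Ici T) := by
    apply monotoneOn_of_deriv_nonneg (convex_Ici T)
    · intro x hx; exact ((hφd x hx).continuousAt).continuousWithinAt
    · intro x hx
      rw [interior_Ici] at hx
      exact ((hφd x (le_of_lt hx)).differentiableAt).differentiableWithinAt
    · intro x hx
      rw [interior_Ici] at hx
      rw [(hφd x (le_of_lt hx)).deriv]
      have := hm x (le_of_lt hx); linarith
  have := hmono (Set.self_mem_Ici) (Set.mem_Ici.2 ht) ht
  simp only [hφdef] at this
  simp at this; linarith

lemma ge_of_deriv_ge (f g : ℝ → ℝ) (T m : ℝ)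
    (hd : ∀ t, T ≤ t → HasDerivAt f (g t) t) (hm : ∀ t, T ≤ t → m ≤ g t) :
    ∀ t, T ≤ t → f T + m * (t - T) ≤ f t := by
  intro t ht
  have := le_of_deriv_le (fun s => -f s) (fun s => -g s) T (-m)
    (fun s hs => (hd s hs).neg) (fun s hs => by simpa using neg_le_neg (hm s hs)) t ht
  simp at this; linarith


/-- boundary sign condition for `f1 = xd - rs * xa`. -/
lemma bnd1_aux (a1 b1 d1 d2 τ C σ2 p kp rs dl gm K0 X Y XD N T : ℝ)
    (hC : 0 < C) (hσ2 : 0 < σ2) (hτ : 0 ≤ τ) (hp0 : 0 < p) (hrs : 0 < rs)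
    (hgm : gm = τ + dl) (hsrs : σ2 * rs = (b1 - a1 - τ) - dl)
    (hK0 : K0 = C * kp + (b1 - d1))
    (hc1 : (p + rs) * C * kp + p * (b1 - d1) - rs * (d2 + σ2) + rs * dl < 0)
    (hc12 : (p + rs) * C * kp + p * (a1 - d1) - rs * (d2 + (1 - p) * σ2) < 0)
    (hN : N = X + Y) (hT : T * N = τ * X * Y)
    (hX : 0 < X) (hY : 0 ≤ Y) (hNpos : 0 < N)
    (hXD : XD = rs * X)
    (hf2 : C * N ^ 2 + gm * X - K0 * N ≤ 0) :
    p * C * X * N - (d2 + σ2) * XD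
      - rs * (X * (a1 - d1 - C * N) + σ2 * XD + T) < 0 := by
  -- abbreviations for the two linear coefficients
  set c1 : ℝ := (p + rs) * K0 - rs * ((d2 + σ2) + (a1 - d1) + σ2 * rs + τ) with hc1def
  set c2 : ℝ := rs * τ - (p + rs) * gm with hc2def
  have hc1' : c1 < 0 := by
    have e : c1 = (p + rs) * C * kp + p * (b1 - d1) - rs * (d2 + σ2) + rs * dl := by
      rw [hc1def, hK0]; linear_combination (-rs) * hsrs
    rw [e]; exact hc1
  have hc2' : c1 + c2 < 0 := by
    have e : c1 + c2 = (p + rs) * C * kp + p * (a1 - d1) - rs * (d2 + (1 - p) * σ2) := by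
      rw [hc1def, hc2def, hK0, hgm]; linear_combination (-rs - p) * hsrs
    rw [e]; exact hc12
  -- multiply the target by N and bound
  have key : (p * C * X * N - (d2 + σ2) * XD
      - rs * (X * (a1 - d1 - C * N) + σ2 * XD + T)) * N
      = X * ((p + rs) * (C * N ^ 2) - rs * ((d2 + σ2) + (a1 - d1) + σ2 * rs) * N
          - rs * τ * (N - X)) := by
    rw [hXD, hN] at *
    linear_combination (-rs) * hT
  have hCN2 : C * N ^ 2 ≤ K0 * N - gm * X := by linarith
  have step : (p + rs) * (C * N ^ 2) ≤ (p + rs) * (K0 * N - gm * X) :=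
    mul_le_mul_of_nonneg_left hCN2 (by linarith)
  have inner_le : (p + rs) * (C * N ^ 2) - rs * ((d2 + σ2) + (a1 - d1) + σ2 * rs) * N
      - rs * τ * (N - X) ≤ N * c1 + X * c2 := by
    have e : (p + rs) * (K0 * N - gm * X) - rs * ((d2 + σ2) + (a1 - d1) + σ2 * rs) * N
        - rs * τ * (N - X) = N * c1 + X * c2 := by rw [hc1def, hc2def]; ring
    linarith
  have hfin : N * c1 + X * c2 < 0 := by
    have e : N * c1 + X * c2 = X * (c1 + c2) + (N - X) * c1 := by ring
    have h1 : X * (c1 + c2) < 0 := mul_neg_of_pos_of_neg hX hc2'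
    have h2 : (N - X) * c1 ≤ 0 := mul_nonpos_of_nonneg_of_nonpos (by rw [hN]; linarith) hc1'.le
    linarith
  have hprod : (p * C * X * N - (d2 + σ2) * XD
      - rs * (X * (a1 - d1 - C * N) + σ2 * XD + T)) * N < 0 := by
    rw [key]
    have : (p + rs) * (C * N ^ 2) - rs * ((d2 + σ2) + (a1 - d1) + σ2 * rs) * N
        - rs * τ * (N - X) < 0 := lt_of_le_of_lt inner_le hfin
    exact mul_neg_of_pos_of_neg hX this
  by_contra hcon
  push_neg at hcon
  exact absurd hprod (not_lt.2 (mul_nonneg hcon hNpos.le))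

/-- boundary sign condition for `f2 = C n² + gm xa - K0 n`. -/
lemma bnd2_aux (a1 b1 d1 d2 τ C σ2 kp rs dl gm K0 X Y XD N T : ℝ)
    (hC : 0 < C) (hσ2 : 0 < σ2) (hkp : 0 < kp) (hdl : 0 < dl) (hgm_pos : 0 < gm)
    (hgm : gm = τ + dl) (hsrs : σ2 * rs = (b1 - a1 - τ) - dl)
    (hK0 : K0 = C * kp + (b1 - d1))
    (hN : N = X + Y) (hT : T * N = τ * X * Y)
    (hX : 0 < X) (hY : 0 ≤ Y) (hNpos : 0 < N)
    (hXDnn : 0 ≤ XD) (hXD : XD ≤ rs * X)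
    (hbnd : C * N ^ 2 + gm * X - K0 * N = 0) :
    (2 * C * N - K0) * ((X * (a1 - d1 - C * N) + σ2 * XD + T)
        + (Y * (b1 - d1 - C * N) - T))
      + gm * (X * (a1 - d1 - C * N) + σ2 * XD + T) < 0 := by
  set n' : ℝ := X * (a1 - d1) + Y * (b1 - d1) - C * N ^ 2 + σ2 * XD with hn'def
  have hsum : (X * (a1 - d1 - C * N) + σ2 * XD + T) + (Y * (b1 - d1 - C * N) - T) = n' := by
    rw [hn'def, hN]; ring
  have hn'le : n' ≤ -(C * kp) * N := by
    have e : n' = -(C * kp) * N - σ2 * (rs * X - XD) := by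
      rw [hn'def]
      linear_combination (-1 : ℝ) * hbnd + (-N) * hK0 + X * hgm + (-(b1 - d1)) * hN + X * hsrs
    have h1 : 0 ≤ σ2 * (rs * X - XD) := mul_nonneg hσ2.le (by linarith)
    linarith
  -- key identity after multiplying by N
  have key : ((2 * C * N - K0) * ((X * (a1 - d1 - C * N) + σ2 * XD + T)
        + (Y * (b1 - d1 - C * N) - T))
      + gm * (X * (a1 - d1 - C * N) + σ2 * XD + T)) * N
      = C * N ^ 2 * n' + gm * (Y * (σ2 * XD - (b1 - a1 - τ) * X)) := by
    rw [hsum, hn'def]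
    linear_combination (X * (a1 - d1) + Y * (b1 - d1) - C * N ^ 2 + σ2 * XD) * hbnd
      + gm * hT + gm * (X * (a1 - d1) + σ2 * XD) * hN
  have h1 : C * N ^ 2 * n' ≤ C * N ^ 2 * (-(C * kp) * N) :=
    mul_le_mul_of_nonneg_left hn'le (by positivity)
  have h2 : σ2 * XD - (b1 - a1 - τ) * X ≤ -(dl * X) := by
    have h3 : σ2 * XD ≤ σ2 * (rs * X) := mul_le_mul_of_nonneg_left hXD hσ2.le
    have h4 : σ2 * (rs * X) = (b1 - a1 - τ) * X - dl * X := by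
      linear_combination X * hsrs
    linarith
  have h5 : Y * (σ2 * XD - (b1 - a1 - τ) * X) ≤ Y * (-(dl * X)) :=
    mul_le_mul_of_nonneg_left h2 hY
  have h6 : gm * (Y * (σ2 * XD - (b1 - a1 - τ) * X)) ≤ 0 := by
    have : Y * (-(dl * X)) ≤ 0 := by
      have : 0 ≤ Y * (dl * X) := mul_nonneg hY (mul_nonneg hdl.le hX.le)
      linarith
    exact mul_nonpos_of_nonneg_of_nonpos hgm_pos.le (le_trans h5 this)
  have h7 : C * N ^ 2 * (-(C * kp) * N) < 0 := by
    have : 0 < C * N ^ 2 * ((C * kp) * N) := by positivity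
    linarith
  have hprod : ((2 * C * N - K0) * ((X * (a1 - d1 - C * N) + σ2 * XD + T)
        + (Y * (b1 - d1 - C * N) - T))
      + gm * (X * (a1 - d1 - C * N) + σ2 * XD + T)) * N < 0 := by
    rw [key]; linarith
  by_contra hcon
  push_neg at hcon
  exact absurd hprod (not_lt.2 (mul_nonneg hcon hNpos.le))

/-- boundary sign condition for `f3`. -/
lemma bnd3_aux (a1 d1 C σ2 M X XD N T : ℝ)
    (hC : 0 < C) (hσ2 : 0 < σ2) (hM : 0 < M) (hal : 0 ≤ a1 - d1)
    (hX : 0 < X) (hXDnn : 0 ≤ XD) (hTnn : 0 ≤ T)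
    (hXN : X ≤ N) (hNM : N ≤ M) :
    X * (-(2 * C * M)) - (X * (a1 - d1 - C * N) + σ2 * XD + T) < 0 := by
  have h1 : C * X * N ≤ C * X * M :=
    mul_le_mul_of_nonneg_left hNM (mul_nonneg hC.le hX.le)
  have h2 : 0 ≤ X * (a1 - d1) := mul_nonneg hX.le hal
  have h3 : 0 ≤ σ2 * XD := mul_nonneg hσ2.le hXDnn
  have h4 : X * (a1 - d1 - C * N) = X * (a1 - d1) - C * X * N := by ring
  have h5 : 0 < C * M * X := by positivity
  have h6 : X * (-(2 * C * M)) = -(2 * (C * M * X)) := by ring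
  have h7 : C * X * M = C * M * X := by ring
  linarith

end helpers

set_option maxHeartbeats 4000000 in
/-- Under the fitness conditions `b1 − τ − d1 − C·x̄ₐ > 0` and
`−(a1 + τ − d1 − C·ȳ) > σ2·p·C·ȳ/(d2+σ2)`, every nonnegative solution of the
three-dimensional competition system with reversed transfer (transfer towards
the bi-type population) started in `𝒜_ε` converges to `(0, 0, ȳ)`, for all
small `ε`. -/
theorem three_dim_competition_convergence_reversed_transfer
    (a1 b1 d1 d2 τ C σ2 p xabar xdbar ybar : ℝ)
    (hd1 : 0 ≤ d1) (ha1 : d1 < a1) (hb1 : d1 < b1) (hd2 : 0 ≤ d2) (hτ : 0 ≤ τ)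
    (hC : 0 < C) (hσ2 : 0 < σ2) (hp0 : 0 < p) (hp1 : p < 1)
    (hxabar : xabar = (a1 - d1) * (d2 + σ2) / (C * (d2 + (1 - p) * σ2)))
    (hxdbar : xdbar = p * (a1 - d1) ^ 2 * (d2 + σ2) / (C * (d2 + (1 - p) * σ2) ^ 2))
    (hybar : ybar = (b1 - d1) / C)
    (hfitY : 0 < b1 - τ - d1 - C * xabar)
    (hfitX : σ2 * p * C * ybar / (d2 + σ2) < -(a1 + τ - d1 - C * ybar)) :
    ∀ A : ℝ, 0 < A → ∃ ε₀ : ℝ, 0 < ε₀ ∧ ε₀ ≤ 1 ∧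
      ∀ ε : ℝ, 0 < ε → ε ≤ ε₀ →
        ∀ xa xd y : ℝ → ℝ,
          (∀ t, 0 ≤ t → HasDerivAt xa
            (xa t * (a1 - d1 - C * (xa t + y t)) + σ2 * xd t
              + τ * xa t * y t / (xa t + y t)) t) →
          (∀ t, 0 ≤ t → HasDerivAt xd
            (p * C * xa t * (xa t + y t) - (d2 + σ2) * xd t) t) →
          (∀ t, 0 ≤ t → HasDerivAt y
            (y t * (b1 - d1 - C * (xa t + y t))
              - τ * xa t * y t / (xa t + y t)) t) →
          (∀ t, 0 ≤ t → 0 ≤ xa t ∧ 0 ≤ xd t ∧ 0 ≤ y t) →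
          (∀ t, 0 ≤ t → 0 < y t ∧ 0 < xa t + y t) →
          xabar - 2 * A * Real.sqrt ε ≤ xa 0 → xa 0 ≤ xabar + 2 * A * Real.sqrt ε →
          xdbar - 2 * A * Real.sqrt ε ≤ xd 0 → xd 0 ≤ xdbar + 2 * A * Real.sqrt ε →
          ε ≤ y 0 → y 0 ≤ Real.sqrt ε →
          Filter.Tendsto (fun t => (xa t, xd t, y t)) Filter.atTop
            (nhds ((0 : ℝ), (0 : ℝ), ybar)) := by
  -- basic constants (introduced as opaque variables)
  obtain ⟨al, hal_def⟩ : ∃ x : ℝ, x = a1 - d1 := ⟨_, rfl⟩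
  obtain ⟨be, hbe_def⟩ : ∃ x : ℝ, x = b1 - a1 - τ := ⟨_, rfl⟩
  obtain ⟨ds, hds_def⟩ : ∃ x : ℝ, x = d2 + σ2 := ⟨_, rfl⟩
  obtain ⟨Dq, hDq_def⟩ : ∃ x : ℝ, x = d2 + (1 - p) * σ2 := ⟨_, rfl⟩
  have h_al : 0 < al := by rw [hal_def]; linarith
  have h_ds : 0 < ds := by rw [hds_def]; linarith
  have h_Dq : 0 < Dq := by rw [hDq_def]; nlinarith
  obtain ⟨rb, hrb_def⟩ : ∃ x : ℝ, x = p * al / Dq := ⟨_, rfl⟩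
  have h_rb : 0 < rb := by rw [hrb_def]; exact div_pos (mul_pos hp0 h_al) h_Dq
  have hrbDq : rb * Dq = p * al := by rw [hrb_def]; field_simp
  have hDqne : d2 + (1 - p) * σ2 ≠ 0 := by nlinarith
  have hCxa : C * xabar = al + σ2 * rb := by
    rw [hxabar, hrb_def, hal_def, hDq_def]
    field_simp [hC.ne', hDqne]
    have hD : d2 + σ2 * (1 - p) ≠ 0 := by rw [mul_comm]; exact hDqne
    field_simp
    ring
  have hxd_rb : xdbar = rb * xabar := by
    rw [hxdbar, hxabar, hrb_def, hal_def, hDq_def]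
    field_simp [hC.ne', hDqne]
  have hxabar_pos : 0 < xabar := by
    rw [hxabar]
    exact div_pos (mul_pos (by linarith) (by linarith)) (mul_pos hC (by nlinarith))
  obtain ⟨F, hF_def⟩ : ∃ x : ℝ, x = be - σ2 * rb := ⟨_, rfl⟩
  have hF : 0 < F := by
    have h9 : b1 - τ - d1 - C * xabar = be - σ2 * rb := by
      rw [hbe_def]; linarith [hCxa, hal_def]
    rw [hF_def]; linarith [hfitY]
  have h_be : 0 < be := by
    have h1 : 0 < σ2 * rb := mul_pos hσ2 h_rb
    have h2 : F = be - σ2 * rb := hF_def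
    linarith
  have hCyb : C * ybar = b1 - d1 := by rw [hybar]; field_simp
  obtain ⟨E, hE_def⟩ : ∃ x : ℝ, x = be * ds - p * σ2 * (b1 - d1) := ⟨_, rfl⟩
  have hE : 0 < E := by
    have h1 : σ2 * p * C * ybar / ds < be := by
      have h2 : -(a1 + τ - d1 - C * ybar) = be := by rw [hCyb, hbe_def]; ring
      rw [hds_def]; rw [h2] at hfitX; exact hfitX
    have h2 : σ2 * p * C * ybar < be * ds := (div_lt_iff₀ h_ds).1 h1
    have h3 : p * σ2 * (b1 - d1) < be * ds := by
      have : p * σ2 * (b1 - d1) = σ2 * p * C * ybar := by rw [← hCyb]; ring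
      linarith
    rw [hE_def]; linarith
  obtain ⟨dl, hdl_def⟩ : ∃ x : ℝ, x = min (F / 2) (E / (2 * (be + ds))) := ⟨_, rfl⟩
  have h_dl_pos : 0 < dl := by
    rw [hdl_def]
    exact lt_min (by linarith) (div_pos hE (by linarith))
  have h_dl_F : dl ≤ F / 2 := hdl_def ▸ min_le_left _ _
  have h_dl_E : dl * (2 * (be + ds)) ≤ E := by
    have h1 : dl ≤ E / (2 * (be + ds)) := hdl_def ▸ min_le_right _ _
    have hpos : 0 < 2 * (be + ds) := by linarith
    calc dl * (2 * (be + ds)) ≤ (E / (2 * (be + ds))) * (2 * (be + ds)) :=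
          mul_le_mul_of_nonneg_right h1 hpos.le
      _ = E := by field_simp
  have h_dl_lt_be : dl < be := by
    have h1 : 0 < σ2 * rb := mul_pos hσ2 h_rb
    have h2 : F = be - σ2 * rb := hF_def
    linarith
  obtain ⟨rs, hrs_def⟩ : ∃ x : ℝ, x = (be - dl) / σ2 := ⟨_, rfl⟩
  have h_srs : σ2 * rs = be - dl := by rw [hrs_def]; field_simp
  have h_rs_pos : 0 < rs := by
    rw [hrs_def]; exact div_pos (by linarith) hσ2
  have h_rb_rs : rb < rs := by
    have h1 : σ2 * rb < σ2 * rs := by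
      rw [h_srs]
      have h2 : F = be - σ2 * rb := hF_def
      linarith
    exact (mul_lt_mul_iff_right₀ hσ2).1 h1
  obtain ⟨m0, hm0_def⟩ : ∃ x : ℝ, x = min (E / (2 * σ2)) (F * Dq / (2 * σ2)) := ⟨_, rfl⟩
  have h_m0 : 0 < m0 := by
    rw [hm0_def]
    exact lt_min (div_pos hE (by linarith)) (div_pos (mul_pos hF h_Dq) (by linarith))
  obtain ⟨kp, hkp_def⟩ : ∃ x : ℝ, x = m0 / (2 * C * (p + rs)) := ⟨_, rfl⟩
  have h_kp : 0 < kp := by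
    rw [hkp_def]
    exact div_pos h_m0 (mul_pos (by linarith) (by linarith))
  have h_kpm : (p + rs) * C * kp = m0 / 2 := by
    rw [hkp_def]; field_simp
  -- c1 < 0
  have hc1 : (p + rs) * C * kp + p * (b1 - d1) - rs * ds + rs * dl < 0 := by
    have k1 : σ2 * (rs * (ds - dl)) = (be - dl) * (ds - dl) := by rw [← h_srs]; ring
    have k2 : (be - dl) * (ds - dl) ≥ be * ds - dl * (be + ds) := by
      have e : (be - dl) * (ds - dl) - (be * ds - dl * (be + ds)) = dl ^ 2 := by ring
      have := sq_nonneg dl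
      linarith
    have k3 : be * ds - dl * (be + ds) ≥ p * σ2 * (b1 - d1) + E / 2 := by
      have e1 : E = be * ds - p * σ2 * (b1 - d1) := hE_def
      have e2 : dl * (2 * (be + ds)) = 2 * (dl * (be + ds)) := by ring
      linarith [h_dl_E]
    have k4 : σ2 * (p * (b1 - d1)) = p * σ2 * (b1 - d1) := by ring
    have k5 : m0 ≤ E / (2 * σ2) := hm0_def ▸ min_le_left _ _
    have k6 : σ2 * m0 ≤ E / 2 := by
      have h1 := mul_le_mul_of_nonneg_left k5 hσ2.le
      calc σ2 * m0 ≤ σ2 * (E / (2 * σ2)) := h1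
        _ = E / 2 := by field_simp
    have k7 : σ2 * (p * (b1 - d1) + m0) ≤ σ2 * (rs * (ds - dl)) := by
      have e : σ2 * (p * (b1 - d1) + m0) = σ2 * (p * (b1 - d1)) + σ2 * m0 := by ring
      linarith
    have k8 : p * (b1 - d1) + m0 ≤ rs * (ds - dl) :=
      le_of_mul_le_mul_left k7 hσ2
    have k9 : rs * (ds - dl) = rs * ds - rs * dl := by ring
    linarith [h_kpm, h_m0]
  -- c1 + c2 < 0
  have hc12 : (p + rs) * C * kp + p * al - rs * Dq < 0 := by
    have k1 : σ2 * (rs * Dq) = (be - dl) * Dq := by rw [← h_srs]; ring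
    have k2 : be - dl ≥ σ2 * rb + F / 2 := by
      have e : F = be - σ2 * rb := hF_def
      linarith [h_dl_F]
    have k3 : (be - dl) * Dq ≥ (σ2 * rb + F / 2) * Dq :=
      mul_le_mul_of_nonneg_right k2 h_Dq.le
    have k4 : (σ2 * rb + F / 2) * Dq = σ2 * (rb * Dq) + F * Dq / 2 := by ring
    have k5 : m0 ≤ F * Dq / (2 * σ2) := hm0_def ▸ min_le_right _ _
    have k6 : σ2 * m0 ≤ F * Dq / 2 := by
      have h1 := mul_le_mul_of_nonneg_left k5 hσ2.le
      calc σ2 * m0 ≤ σ2 * (F * Dq / (2 * σ2)) := h1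
        _ = F * Dq / 2 := by field_simp
    have k7 : σ2 * (p * al + m0) ≤ σ2 * (rs * Dq) := by
      have e1 : σ2 * (p * al + m0) = σ2 * (p * al) + σ2 * m0 := by ring
      have e2 : σ2 * (rb * Dq) = σ2 * (p * al) := by rw [hrbDq]
      linarith
    have k8 : p * al + m0 ≤ rs * Dq := le_of_mul_le_mul_left k7 hσ2
    linarith [h_kpm, h_m0]
  obtain ⟨gm, hgm_def⟩ : ∃ x : ℝ, x = τ + dl := ⟨_, rfl⟩
  have h_gm : 0 < gm := by rw [hgm_def]; linarith
  obtain ⟨K0, hK0_def⟩ : ∃ x : ℝ, x = C * kp + (b1 - d1) := ⟨_, rfl⟩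
  obtain ⟨M, hM_def⟩ : ∃ x : ℝ, x = kp + ybar := ⟨_, rfl⟩
  have hybar_pos : 0 < ybar := by rw [hybar]; exact div_pos (by linarith) hC
  have hM_pos : 0 < M := by rw [hM_def]; linarith
  have hCM : C * M = K0 := by rw [hM_def, hK0_def, mul_add, hCyb]
  intro A hA
  -- epsilon choice
  obtain ⟨s1, hs1_def⟩ : ∃ x : ℝ, x = (rs - rb) * xabar / (2 * A * (1 + rs)) := ⟨_, rfl⟩
  obtain ⟨s2, hs2_def⟩ : ∃ x : ℝ, x = F / (2 * C * (2 * A + 1)) := ⟨_, rfl⟩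
  obtain ⟨s3, hs3_def⟩ : ∃ x : ℝ, x = xabar / (4 * A) := ⟨_, rfl⟩
  have hs1 : 0 < s1 := by
    rw [hs1_def]
    exact div_pos (mul_pos (by linarith) hxabar_pos) (mul_pos (by linarith) (by linarith))
  have hs2 : 0 < s2 := by
    rw [hs2_def]
    exact div_pos hF (mul_pos (by linarith) (by linarith))
  have hs3 : 0 < s3 := by
    rw [hs3_def]; exact div_pos hxabar_pos (by linarith)
  obtain ⟨sm, hsm_def⟩ : ∃ x : ℝ, x = min s1 (min s2 s3) := ⟨_, rfl⟩
  have hsm : 0 < sm := hsm_def ▸ lt_min hs1 (lt_min hs2 hs3)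
  refine ⟨min 1 (sm ^ 2), lt_min one_pos (pow_pos hsm 2), min_le_left _ _, ?_⟩
  intro ε hε hεle xa xd y hdxa hdxd hdy hnn hpos hxa0l hxa0u hxd0l hxd0u hy0l hy0u
  have hsqrt : Real.sqrt ε ≤ sm := by
    have h1 : ε ≤ sm ^ 2 := le_trans hεle (min_le_right _ _)
    calc Real.sqrt ε ≤ Real.sqrt (sm ^ 2) := Real.sqrt_le_sqrt h1
      _ = sm := Real.sqrt_sq hsm.le
  have hsq1 : Real.sqrt ε ≤ s1 := le_trans hsqrt (hsm_def ▸ min_le_left _ _)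
  have hsq2 : Real.sqrt ε ≤ s2 :=
    le_trans hsqrt (hsm_def ▸ le_trans (min_le_right _ _) (min_le_left _ _))
  have hsq3 : Real.sqrt ε ≤ s3 :=
    le_trans hsqrt (hsm_def ▸ le_trans (min_le_right _ _) (min_le_right _ _))
  have hsqrt_nn : 0 ≤ Real.sqrt ε := Real.sqrt_nonneg ε
  have hxa0_pos : 0 < xa 0 := by
    have h2A : 2 * A * Real.sqrt ε ≤ xabar / 2 := by
      rw [hs3_def] at hsq3
      have := mul_le_mul_of_nonneg_left hsq3 (by linarith : (0:ℝ) ≤ 2 * A)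
      calc 2 * A * Real.sqrt ε ≤ 2 * A * (xabar / (4 * A)) := this
        _ = xabar / 2 := by field_simp; ring
    linarith
  have hy0_pos : 0 < y 0 := (hpos 0 le_rfl).1
  -- the three barrier functions and their derivatives
  have hd1' : ∀ t, 0 ≤ t → HasDerivAt (fun t => xd t - rs * xa t)
      ((p * C * xa t * (xa t + y t) - (d2 + σ2) * xd t)
        - rs * (xa t * (a1 - d1 - C * (xa t + y t)) + σ2 * xd t
            + τ * xa t * y t / (xa t + y t))) t :=
    fun t ht => (hdxd t ht).sub ((hdxa t ht).const_mul rs)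
  have hd2' : ∀ t, 0 ≤ t → HasDerivAt
      (fun t => C * (xa t + y t) ^ 2 + gm * xa t - K0 * (xa t + y t))
      ((2 * C * (xa t + y t) - K0) *
          ((xa t * (a1 - d1 - C * (xa t + y t)) + σ2 * xd t
              + τ * xa t * y t / (xa t + y t))
            + (y t * (b1 - d1 - C * (xa t + y t))
              - τ * xa t * y t / (xa t + y t)))
        + gm * (xa t * (a1 - d1 - C * (xa t + y t)) + σ2 * xd t
            + τ * xa t * y t / (xa t + y t))) t := by
    intro t ht
    have hsum := (hdxa t ht).add (hdy t ht)
    have h := (((hsum.pow 2).const_mul C).add ((hdxa t ht).const_mul gm)).sub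
      (hsum.const_mul K0)
    exact h.congr_deriv (by simp only [Pi.add_apply]; push_cast; ring)
  have hd3' : ∀ t, 0 ≤ t → HasDerivAt
      (fun t => xa 0 / 2 * Real.exp (-(2 * C * M) * t) - xa t)
      (xa 0 / 2 * (Real.exp (-(2 * C * M) * t) * (-(2 * C * M)))
        - (xa t * (a1 - d1 - C * (xa t + y t)) + σ2 * xd t
            + τ * xa t * y t / (xa t + y t))) t := by
    intro t ht
    have h1 : HasDerivAt (fun s : ℝ => -(2 * C * M) * s) (-(2 * C * M)) t := by
      simpa using (hasDerivAt_id t).const_mul (-(2 * C * M))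
    exact ((h1.exp.const_mul (xa 0 / 2)).sub (hdxa t ht)).congr_deriv (by ring)
  -- initial conditions
  obtain ⟨Q, hQ_def⟩ : ∃ x : ℝ, x = Real.sqrt ε := ⟨_, rfl⟩
  have hQnn : 0 ≤ Q := hQ_def ▸ hsqrt_nn
  have h01 : xd 0 - rs * xa 0 ≤ 0 := by
    have k1 : Q * (2 * A * (1 + rs)) ≤ (rs - rb) * xabar := by
      rw [hQ_def, hs1_def] at *
      exact (le_div_iff₀ (by positivity)).1 hsq1
    have k2 : rs * (xabar - 2 * A * Q) ≤ rs * xa 0 := by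
      apply mul_le_mul_of_nonneg_left _ h_rs_pos.le
      rw [hQ_def]; exact hxa0l
    have k3 : xd 0 ≤ rb * xabar + 2 * A * Q := by
      rw [hQ_def]; rw [hxd_rb] at hxd0u; exact hxd0u
    have e1 : rs * (xabar - 2 * A * Q) = rs * xabar - 2 * A * (rs * Q) := by ring
    have e2 : Q * (2 * A * (1 + rs)) = 2 * A * Q + 2 * A * (rs * Q) := by ring
    linarith
  have h02 : C * (xa 0 + y 0) ^ 2 + gm * xa 0 - K0 * (xa 0 + y 0) ≤ 0 := by
    have k1 : Q * (2 * C * (2 * A + 1)) ≤ F := by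
      rw [hQ_def, hs2_def] at *
      exact (le_div_iff₀ (by positivity)).1 hsq2
    have hn0 : xa 0 + y 0 ≤ xabar + 2 * A * Q + Q := by
      rw [hQ_def]; linarith
    have key : C * (xa 0 + y 0) + gm ≤ K0 := by
      have e1 : C * (xabar + 2 * A * Q + Q) = C * xabar + 2 * A * (C * Q) + C * Q := by ring
      have e2 : Q * (2 * C * (2 * A + 1)) = 4 * A * (C * Q) + 2 * (C * Q) := by ring
      have e3 : C * (xa 0 + y 0) ≤ C * (xabar + 2 * A * Q + Q) :=
        mul_le_mul_of_nonneg_left hn0 hC.le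
      have e4 : b1 - d1 = al + be + τ := by rw [hal_def, hbe_def]; ring
      have e5 : F = be - σ2 * rb := hF_def
      have e6 : gm = τ + dl := hgm_def
      have e7 : K0 = C * kp + (b1 - d1) := hK0_def
      have e8 : 0 < C * kp := mul_pos hC h_kp
      linarith [h_dl_F]
    have k2 : gm * xa 0 ≤ gm * (xa 0 + y 0) :=
      mul_le_mul_of_nonneg_left (by linarith) h_gm.le
    have k3 : (C * (xa 0 + y 0) + gm) * (xa 0 + y 0) ≤ K0 * (xa 0 + y 0) :=
      mul_le_mul_of_nonneg_right key (by linarith)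
    have e9 : (C * (xa 0 + y 0) + gm) * (xa 0 + y 0)
        = C * (xa 0 + y 0) ^ 2 + gm * (xa 0 + y 0) := by ring
    linarith
  have h03 : xa 0 / 2 * Real.exp (-(2 * C * M) * 0) - xa 0 ≤ 0 := by
    norm_num; linarith
  -- boundary conditions
  have hXlow : ∀ t, 0 ≤ t → xa 0 / 2 * Real.exp (-(2 * C * M) * t) - xa t ≤ 0 →
      0 < xa t := by
    intro t ht h
    have h2 : 0 < xa 0 / 2 * Real.exp (-(2 * C * M) * t) :=
      mul_pos (by linarith) (Real.exp_pos _)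
    linarith
  have hNM' : ∀ t, 0 ≤ t →
      C * (xa t + y t) ^ 2 + gm * xa t - K0 * (xa t + y t) ≤ 0 → xa t + y t ≤ M := by
    intro t ht h
    have hN := (hpos t ht).2
    have hXnn := (hnn t ht).1
    have k1 : C * (xa t + y t) ^ 2 ≤ K0 * (xa t + y t) := by
      have : 0 ≤ gm * xa t := mul_nonneg h_gm.le hXnn
      linarith
    have k1' : (C * (xa t + y t)) * (xa t + y t) ≤ K0 * (xa t + y t) := by
      have e : C * (xa t + y t) ^ 2 = (C * (xa t + y t)) * (xa t + y t) := by ring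
      linarith
    have k2 : C * (xa t + y t) ≤ K0 := le_of_mul_le_mul_right k1' hN
    rw [← hCM] at k2
    exact (mul_le_mul_iff_right₀ hC).1 k2
  have hInv : ∀ t, 0 ≤ t → (xd t - rs * xa t ≤ 0) ∧
      (C * (xa t + y t) ^ 2 + gm * xa t - K0 * (xa t + y t) ≤ 0) ∧
      (xa 0 / 2 * Real.exp (-(2 * C * M) * t) - xa t ≤ 0) := by
    apply stay_nonpos3 _ _ _ _ _ _ 0 hd1' hd2' hd3' h01 h02 h03
    · -- boundary for f1
      intro t ht hf1 hf2 hf3 heq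
      have hX := hXlow t ht hf3
      have hN := (hpos t ht).2
      have hY := (hnn t ht).2.2
      have hT : (τ * xa t * y t / (xa t + y t)) * (xa t + y t) = τ * xa t * y t :=
        div_mul_cancel₀ _ (ne_of_gt hN)
      exact bnd1_aux a1 b1 d1 d2 τ C σ2 p kp rs dl gm K0 (xa t) (y t) (xd t)
        (xa t + y t) (τ * xa t * y t / (xa t + y t)) hC hσ2 hτ hp0 h_rs_pos
        hgm_def (by rw [h_srs, hbe_def]) hK0_def (by rw [← hds_def]; exact hc1)
        (by rw [← hal_def, ← hDq_def]; exact hc12) rfl hT hX hY hN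
        (by linarith) hf2
    · -- boundary for f2
      intro t ht hf1 hf2 hf3 heq
      have hX := hXlow t ht hf3
      have hN := (hpos t ht).2
      have hY := (hnn t ht).2.2
      have hXDnn := (hnn t ht).2.1
      have hT : (τ * xa t * y t / (xa t + y t)) * (xa t + y t) = τ * xa t * y t :=
        div_mul_cancel₀ _ (ne_of_gt hN)
      exact bnd2_aux a1 b1 d1 d2 τ C σ2 kp rs dl gm K0 (xa t) (y t) (xd t)
        (xa t + y t) (τ * xa t * y t / (xa t + y t)) hC hσ2 h_kp h_dl_pos h_gm
        hgm_def (by rw [h_srs, hbe_def]) hK0_def rfl hT hX hY hN hXDnn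
        (by linarith) heq
    · -- boundary for f3
      intro t ht hf1 hf2 hf3 heq
      have hN := (hpos t ht).2
      have hY := (hnn t ht).2.2
      have hXnn := (hnn t ht).1
      have hXDnn := (hnn t ht).2.1
      have hNM := hNM' t ht hf2
      have hX : 0 < xa t := hXlow t ht (le_of_eq heq)
      have hTnn : 0 ≤ τ * xa t * y t / (xa t + y t) := by positivity
      have e1 : xa 0 / 2 * (Real.exp (-(2 * C * M) * t) * (-(2 * C * M)))
          = xa t * (-(2 * C * M)) := by
        have e0 : xa 0 / 2 * Real.exp (-(2 * C * M) * t) = xa t := by linarith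
        rw [← e0]; ring
      rw [e1]
      exact bnd3_aux a1 d1 C σ2 M (xa t) (xd t) (xa t + y t)
        (τ * xa t * y t / (xa t + y t)) hC hσ2 hM_pos (by rw [← hal_def]; exact h_al.le)
        hX hXDnn hTnn (by linarith) hNM
  -- global consequences of the invariant region
  have hXpos : ∀ t, 0 ≤ t → 0 < xa t := fun t ht => hXlow t ht (hInv t ht).2.2
  have hNleM : ∀ t, 0 ≤ t → xa t + y t ≤ M := fun t ht => hNM' t ht (hInv t ht).2.1
  have hXDle : ∀ t, 0 ≤ t → xd t ≤ rs * xa t := fun t ht => by linarith [(hInv t ht).1]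
  -- exponential decay of xa / y
  obtain ⟨R0, hR0_def⟩ : ∃ x : ℝ, x = xa 0 / y 0 := ⟨_, rfl⟩
  have hR0 : 0 < R0 := hR0_def ▸ div_pos hxa0_pos hy0_pos
  have hu : ∀ t, 0 ≤ t → HasDerivAt (fun s => Real.log (xa s) - Real.log (y s))
      ((xa t * (a1 - d1 - C * (xa t + y t)) + σ2 * xd t
          + τ * xa t * y t / (xa t + y t)) / xa t
        - (y t * (b1 - d1 - C * (xa t + y t))
          - τ * xa t * y t / (xa t + y t)) / y t) t :=
    fun t ht => ((hdxa t ht).log (hXpos t ht).ne').sub ((hdy t ht).log (hpos t ht).1.ne')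
  have hu_le : ∀ t, 0 ≤ t →
      (xa t * (a1 - d1 - C * (xa t + y t)) + σ2 * xd t
          + τ * xa t * y t / (xa t + y t)) / xa t
        - (y t * (b1 - d1 - C * (xa t + y t))
          - τ * xa t * y t / (xa t + y t)) / y t ≤ -dl := by
    intro t ht
    have hX := hXpos t ht
    have hY := (hpos t ht).1
    have hN := (hpos t ht).2
    have e : (xa t * (a1 - d1 - C * (xa t + y t)) + σ2 * xd t
          + τ * xa t * y t / (xa t + y t)) / xa t
        - (y t * (b1 - d1 - C * (xa t + y t))
          - τ * xa t * y t / (xa t + y t)) / y t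
        = σ2 * xd t / xa t - (b1 - a1 - τ) := by
      field_simp
      ring
    have h1 : σ2 * xd t / xa t ≤ σ2 * rs := by
      rw [div_le_iff₀ hX]
      calc σ2 * xd t ≤ σ2 * (rs * xa t) :=
            mul_le_mul_of_nonneg_left (hXDle t ht) hσ2.le
        _ = σ2 * rs * xa t := by ring
    rw [e, ← hbe_def]
    linarith [h_srs]
  have hu_bound := le_of_deriv_le _ _ 0 (-dl) hu hu_le
  have hxa_le : ∀ t, 0 ≤ t → xa t ≤ R0 * M * Real.exp (-dl * t) := by
    intro t ht
    have hX := hXpos t ht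
    have hY := (hpos t ht).1
    have h2 : Real.log (xa t) - Real.log (y t)
        ≤ Real.log (xa 0) - Real.log (y 0) + -dl * t := by
      have := hu_bound t ht
      simpa using this
    have h3 : xa t / y t ≤ R0 * Real.exp (-dl * t) := by
      have e3 : xa t / y t = Real.exp (Real.log (xa t) - Real.log (y t)) := by
        rw [Real.exp_sub, Real.exp_log hX, Real.exp_log hY]
      have e4 : R0 * Real.exp (-dl * t)
          = Real.exp (Real.log (xa 0) - Real.log (y 0) + -dl * t) := by
        rw [Real.exp_add, Real.exp_sub, Real.exp_log hxa0_pos, Real.exp_log hy0_pos,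
          hR0_def]
      rw [e3, e4]
      exact Real.exp_le_exp.2 h2
    have h5 : xa t ≤ R0 * Real.exp (-dl * t) * y t := by
      have := (div_le_iff₀ hY).1 h3
      linarith
    have h6 : y t ≤ M := by
      have := hNleM t ht
      have := (hnn t ht).1
      linarith
    have h7 : R0 * Real.exp (-dl * t) * y t ≤ R0 * Real.exp (-dl * t) * M :=
      mul_le_mul_of_nonneg_left h6 (by positivity)
    calc xa t ≤ R0 * Real.exp (-dl * t) * M := le_trans h5 h7
      _ = R0 * M * Real.exp (-dl * t) := by ring
  -- xa, xd tend to 0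
  have hexp0 : Filter.Tendsto (fun t : ℝ => Real.exp (-dl * t)) Filter.atTop (nhds 0) := by
    have h1 : Filter.Tendsto (fun t : ℝ => dl * t) Filter.atTop Filter.atTop :=
      Filter.Tendsto.const_mul_atTop h_dl_pos Filter.tendsto_id
    have h2 := Real.tendsto_exp_neg_atTop_nhds_zero.comp h1
    have e : (fun t : ℝ => Real.exp (-dl * t))
        = (fun x : ℝ => Real.exp (-x)) ∘ (fun t : ℝ => dl * t) := by
      funext t; simp [Function.comp, neg_mul]
    rw [e]; exact h2
  have hBd0 : Filter.Tendsto (fun t : ℝ => R0 * M * Real.exp (-dl * t))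
      Filter.atTop (nhds 0) := by
    simpa using hexp0.const_mul (R0 * M)
  have hxa_tendsto : Filter.Tendsto xa Filter.atTop (nhds 0) := by
    apply tendsto_of_tendsto_of_tendsto_of_le_of_le' tendsto_const_nhds hBd0
    · exact (Filter.eventually_ge_atTop 0).mono fun t ht => (hnn t ht).1
    · exact (Filter.eventually_ge_atTop 0).mono fun t ht => hxa_le t ht
  have hxd_tendsto : Filter.Tendsto xd Filter.atTop (nhds 0) := by
    have h1 : Filter.Tendsto (fun t => rs * xa t) Filter.atTop (nhds 0) := by
      simpa using hxa_tendsto.const_mul rs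
    apply tendsto_of_tendsto_of_tendsto_of_le_of_le' tendsto_const_nhds h1
    · exact (Filter.eventually_ge_atTop 0).mono fun t ht => (hnn t ht).2.1
    · exact (Filter.eventually_ge_atTop 0).mono fun t ht => hXDle t ht
  -- lower bound for n = xa + y
  obtain ⟨c, hc_def⟩ : ∃ x : ℝ, x = min (xa 0 + y 0) (al / (2 * C)) := ⟨_, rfl⟩
  have hc_pos : 0 < c := hc_def ▸ lt_min (hpos 0 le_rfl).2 (by positivity)
  have hc_n0 : c ≤ xa 0 + y 0 := hc_def ▸ min_le_left _ _
  have hc_al : 2 * (C * c) ≤ al := by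
    have h1 : c ≤ al / (2 * C) := hc_def ▸ min_le_right _ _
    have h2 := (le_div_iff₀ (by positivity : (0:ℝ) < 2 * C)).1 h1
    linarith
  have hsumd : ∀ t, 0 ≤ t → HasDerivAt (fun s => xa s + y s)
      ((xa t * (a1 - d1 - C * (xa t + y t)) + σ2 * xd t
          + τ * xa t * y t / (xa t + y t))
        + (y t * (b1 - d1 - C * (xa t + y t))
          - τ * xa t * y t / (xa t + y t))) t :=
    fun t ht => (hdxa t ht).add (hdy t ht)
  have hbar3 : ∀ t, 0 ≤ t → (c - (xa t + y t) ≤ 0) ∧ (c - (xa t + y t) ≤ 0) ∧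
      (c - (xa t + y t) ≤ 0) := by
    apply stay_nonpos3 _ _ _ _ _ _ 0
      (fun t ht => (hsumd t ht).const_sub c) (fun t ht => (hsumd t ht).const_sub c)
      (fun t ht => (hsumd t ht).const_sub c)
      (show c - (xa 0 + y 0) ≤ 0 by linarith) (show c - (xa 0 + y 0) ≤ 0 by linarith)
      (show c - (xa 0 + y 0) ≤ 0 by linarith)
    all_goals {
      intro t ht h1 h2 h3 heq
      have hXnn := (hnn t ht).1
      have hYnn := (hnn t ht).2.2
      have hXDnn := (hnn t ht).2.1
      have hn_eq : xa t + y t = c := by linarith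
      have e : (xa t * (a1 - d1 - C * (xa t + y t)) + σ2 * xd t
            + τ * xa t * y t / (xa t + y t))
          + (y t * (b1 - d1 - C * (xa t + y t))
            - τ * xa t * y t / (xa t + y t))
          = xa t * al + y t * (b1 - d1) - C * (xa t + y t) ^ 2 + σ2 * xd t := by
        rw [hal_def]; ring
      have h4 : y t * al ≤ y t * (b1 - d1) := by
        apply mul_le_mul_of_nonneg_left _ hYnn
        rw [hal_def]; linarith
      have h5 : 0 ≤ σ2 * xd t := mul_nonneg hσ2.le hXDnn
      have e6 : C * (xa t + y t) ^ 2 = C * c * c := by rw [hn_eq]; ring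
      have e7 : xa t * al + y t * al = c * al := by
        have e11 : (xa t + y t) * al = c * al := by rw [hn_eq]
        linarith [e11, (by ring : (xa t + y t) * al = xa t * al + y t * al)]
      have h8 : 0 < c * (al / 2) := mul_pos hc_pos (by linarith)
      have e9 : c * al - C * c * c = c * (al - C * c) := by ring
      have h10 : c * (al / 2) ≤ c * (al - C * c) :=
        mul_le_mul_of_nonneg_left (by linarith) hc_pos.le
      rw [e]
      linarith
    }
  have hc_low : ∀ t, 0 ≤ t → c ≤ xa t + y t := fun t ht => by linarith [(hbar3 t ht).1]
  -- perturbation bounds for the derivative of n = xa + y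
  obtain ⟨L, hL_def⟩ : ∃ x : ℝ, x = be + τ + σ2 * rs := ⟨_, rfl⟩
  have hL_pos : 0 < L := by
    rw [hL_def]; have := mul_pos hσ2 h_rs_pos; linarith
  have hBdnn : ∀ t : ℝ, 0 ≤ R0 * M * Real.exp (-dl * t) := fun t => by positivity
  have hnd_ub : ∀ t, 0 ≤ t →
      (xa t * (a1 - d1 - C * (xa t + y t)) + σ2 * xd t
          + τ * xa t * y t / (xa t + y t))
        + (y t * (b1 - d1 - C * (xa t + y t))
          - τ * xa t * y t / (xa t + y t))
      ≤ C * (xa t + y t) * (ybar - (xa t + y t)) + L * (R0 * M * Real.exp (-dl * t)) := by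
    intro t ht
    have e5 : (xa t * (a1 - d1 - C * (xa t + y t)) + σ2 * xd t
          + τ * xa t * y t / (xa t + y t))
        + (y t * (b1 - d1 - C * (xa t + y t))
          - τ * xa t * y t / (xa t + y t))
        = (xa t + y t) * (b1 - d1) - C * (xa t + y t) ^ 2 - (be + τ) * xa t + σ2 * xd t := by
      rw [hbe_def]; ring
    have e6 : (xa t + y t) * (b1 - d1) - C * (xa t + y t) ^ 2
        = C * (xa t + y t) * (ybar - (xa t + y t)) := by rw [← hCyb]; ring
    have h1 : σ2 * xd t ≤ σ2 * (rs * xa t) :=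
      mul_le_mul_of_nonneg_left (hXDle t ht) hσ2.le
    have h2 : xa t ≤ R0 * M * Real.exp (-dl * t) := hxa_le t ht
    have h3 : σ2 * rs * xa t ≤ σ2 * rs * (R0 * M * Real.exp (-dl * t)) :=
      mul_le_mul_of_nonneg_left h2 (mul_pos hσ2 h_rs_pos).le
    have h4 : 0 ≤ (be + τ) * xa t := mul_nonneg (by linarith) (hnn t ht).1
    have h5 : σ2 * rs * (R0 * M * Real.exp (-dl * t)) ≤ L * (R0 * M * Real.exp (-dl * t)) :=
      mul_le_mul_of_nonneg_right (by rw [hL_def]; linarith) (hBdnn t)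
    have e7 : σ2 * (rs * xa t) = σ2 * rs * xa t := by ring
    linarith
  have hnd_lb : ∀ t, 0 ≤ t →
      C * (xa t + y t) * (ybar - (xa t + y t)) - L * (R0 * M * Real.exp (-dl * t))
      ≤ (xa t * (a1 - d1 - C * (xa t + y t)) + σ2 * xd t
          + τ * xa t * y t / (xa t + y t))
        + (y t * (b1 - d1 - C * (xa t + y t))
          - τ * xa t * y t / (xa t + y t)) := by
    intro t ht
    have e5 : (xa t * (a1 - d1 - C * (xa t + y t)) + σ2 * xd t
          + τ * xa t * y t / (xa t + y t))
        + (y t * (b1 - d1 - C * (xa t + y t))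
          - τ * xa t * y t / (xa t + y t))
        = (xa t + y t) * (b1 - d1) - C * (xa t + y t) ^ 2 - (be + τ) * xa t + σ2 * xd t := by
      rw [hbe_def]; ring
    have e6 : (xa t + y t) * (b1 - d1) - C * (xa t + y t) ^ 2
        = C * (xa t + y t) * (ybar - (xa t + y t)) := by rw [← hCyb]; ring
    have h1 : 0 ≤ σ2 * xd t := mul_nonneg hσ2.le (hnn t ht).2.1
    have h2 : xa t ≤ R0 * M * Real.exp (-dl * t) := hxa_le t ht
    have h3 : (be + τ) * xa t ≤ (be + τ) * (R0 * M * Real.exp (-dl * t)) :=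
      mul_le_mul_of_nonneg_left h2 (by linarith)
    have h5 : (be + τ) * (R0 * M * Real.exp (-dl * t)) ≤ L * (R0 * M * Real.exp (-dl * t)) :=
      mul_le_mul_of_nonneg_right (by rw [hL_def]; have := mul_pos hσ2 h_rs_pos; linarith)
        (hBdnn t)
    linarith
  -- main epsilon-argument for n → ybar
  have key : ∀ η : ℝ, 0 < η → ∃ T : ℝ, 0 ≤ T ∧ ∀ t, T ≤ t → |(xa t + y t) - ybar| ≤ η := by
    intro η hη
    have hCcη : 0 < C * c * η / 2 := by positivity
    have hLBd : Filter.Tendsto (fun t : ℝ => L * (R0 * M * Real.exp (-dl * t)))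
        Filter.atTop (nhds 0) := by
      simpa using hBd0.const_mul L
    obtain ⟨T₀', hT₀'⟩ := (Metric.tendsto_atTop.1 hLBd) (C * c * η / 2) hCcη
    obtain ⟨T₀, hT₀⟩ : ∃ x : ℝ, x = max T₀' 0 := ⟨_, rfl⟩
    have hT₀0 : 0 ≤ T₀ := hT₀ ▸ le_max_right _ _
    have hsmall : ∀ t, T₀ ≤ t → L * (R0 * M * Real.exp (-dl * t)) ≤ C * c * η / 2 := by
      intro t ht
      have h1 := hT₀' t (le_trans (hT₀ ▸ le_max_left _ _) ht)
      rw [Real.dist_eq] at h1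
      have h2 : L * (R0 * M * Real.exp (-dl * t))
          ≤ |L * (R0 * M * Real.exp (-dl * t)) - 0| := by
        rw [sub_zero]; exact le_abs_self _
      linarith
    have hup : ∀ t, T₀ ≤ t → ybar + η ≤ xa t + y t →
        (xa t * (a1 - d1 - C * (xa t + y t)) + σ2 * xd t
          + τ * xa t * y t / (xa t + y t))
        + (y t * (b1 - d1 - C * (xa t + y t))
          - τ * xa t * y t / (xa t + y t)) ≤ -(C * c * η / 2) := by
      intro t ht hge
      have ht0 : 0 ≤ t := le_trans hT₀0 ht
      have h1 := hnd_ub t ht0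
      have h3 := hc_low t ht0
      have h4 : C * (xa t + y t) * (ybar - (xa t + y t)) ≤ -(C * c * η) := by
        have h5 : ybar - (xa t + y t) ≤ -η := by linarith
        have h6 : 0 ≤ C * (xa t + y t) := mul_nonneg hC.le (by linarith)
        have h7 : C * (xa t + y t) * (ybar - (xa t + y t)) ≤ C * (xa t + y t) * (-η) :=
          mul_le_mul_of_nonneg_left h5 h6
        have h8 : C * c * η ≤ C * (xa t + y t) * η :=
          mul_le_mul_of_nonneg_right (mul_le_mul_of_nonneg_left h3 hC.le) hη.le
        have e : C * (xa t + y t) * (-η) = -(C * (xa t + y t) * η) := by ring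
        linarith
      linarith [hsmall t ht]
    have hdown : ∀ t, T₀ ≤ t → xa t + y t ≤ ybar - η →
        C * c * η / 2 ≤ (xa t * (a1 - d1 - C * (xa t + y t)) + σ2 * xd t
          + τ * xa t * y t / (xa t + y t))
        + (y t * (b1 - d1 - C * (xa t + y t))
          - τ * xa t * y t / (xa t + y t)) := by
      intro t ht hle
      have ht0 : 0 ≤ t := le_trans hT₀0 ht
      have h1 := hnd_lb t ht0
      have h3 := hc_low t ht0
      have h4 : C * c * η ≤ C * (xa t + y t) * (ybar - (xa t + y t)) := by
        have h5 : η ≤ ybar - (xa t + y t) := by linarith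
        have h8 : C * c ≤ C * (xa t + y t) := mul_le_mul_of_nonneg_left h3 hC.le
        have h9 : C * c * η ≤ C * (xa t + y t) * η := mul_le_mul_of_nonneg_right h8 hη.le
        have h10 : C * (xa t + y t) * η ≤ C * (xa t + y t) * (ybar - (xa t + y t)) :=
          mul_le_mul_of_nonneg_left h5 (mul_nonneg hC.le (by linarith))
        linarith
      linarith [hsmall t ht]
    have hreach_up : ∃ t1, T₀ ≤ t1 ∧ xa t1 + y t1 ≤ ybar + η := by
      by_contra hcon
      push_neg at hcon
      have hdec : ∀ t, T₀ ≤ t → (xa t * (a1 - d1 - C * (xa t + y t)) + σ2 * xd t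
          + τ * xa t * y t / (xa t + y t))
        + (y t * (b1 - d1 - C * (xa t + y t))
          - τ * xa t * y t / (xa t + y t)) ≤ -(C * c * η / 2) :=
        fun t ht => hup t ht (le_of_lt (hcon t ht))
      have hlin := le_of_deriv_le (fun s => xa s + y s) _ T₀ (-(C * c * η / 2))
        (fun t ht => hsumd t (le_trans hT₀0 ht)) hdec
      obtain ⟨tb, htb⟩ : ∃ x : ℝ, x = T₀ + (xa T₀ + y T₀ - c + 1) / (C * c * η / 2) :=
        ⟨_, rfl⟩
      have hnum : 0 < xa T₀ + y T₀ - c + 1 := by linarith [hc_low T₀ hT₀0]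
      have h6 : T₀ ≤ tb := by
        rw [htb]; have := le_of_lt (div_pos hnum hCcη); linarith
      have h7 := hlin tb h6
      have h8 := hc_low tb (le_trans hT₀0 h6)
      have e : -(C * c * η / 2) * (tb - T₀) = -(xa T₀ + y T₀ - c + 1) := by
        rw [htb]
        field_simp
        ring
      linarith
    obtain ⟨t1, ht1T, ht1⟩ := hreach_up
    have ht10 : 0 ≤ t1 := le_trans hT₀0 ht1T
    have hstay_up3 : ∀ t, t1 ≤ t → ((xa t + y t) - (ybar + η) ≤ 0) ∧
        ((xa t + y t) - (ybar + η) ≤ 0) ∧ ((xa t + y t) - (ybar + η) ≤ 0) := by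
      apply stay_nonpos3 _ _ _ _ _ _ t1
        (fun t ht => (hsumd t (le_trans ht10 ht)).sub_const (ybar + η))
        (fun t ht => (hsumd t (le_trans ht10 ht)).sub_const (ybar + η))
        (fun t ht => (hsumd t (le_trans ht10 ht)).sub_const (ybar + η))
        (show (xa t1 + y t1) - (ybar + η) ≤ 0 by linarith)
        (show (xa t1 + y t1) - (ybar + η) ≤ 0 by linarith)
        (show (xa t1 + y t1) - (ybar + η) ≤ 0 by linarith)
      all_goals {
        intro t ht h1 h2 h3 heq
        have h4 := hup t (le_trans ht1T ht) (by linarith)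
        linarith [hCcη]
      }
    have hstay_up : ∀ t, t1 ≤ t → xa t + y t ≤ ybar + η :=
      fun t ht => by linarith [(hstay_up3 t ht).1]
    have hreach_dn : ∃ t2, T₀ ≤ t2 ∧ ybar - η ≤ xa t2 + y t2 := by
      by_contra hcon
      push_neg at hcon
      have hinc : ∀ t, T₀ ≤ t → C * c * η / 2 ≤ (xa t * (a1 - d1 - C * (xa t + y t)) + σ2 * xd t
          + τ * xa t * y t / (xa t + y t))
        + (y t * (b1 - d1 - C * (xa t + y t))
          - τ * xa t * y t / (xa t + y t)) :=
        fun t ht => hdown t ht (le_of_lt (hcon t ht))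
      have hlin := ge_of_deriv_ge (fun s => xa s + y s) _ T₀ (C * c * η / 2)
        (fun t ht => hsumd t (le_trans hT₀0 ht)) hinc
      obtain ⟨tb, htb⟩ : ∃ x : ℝ, x = T₀ + (M - (xa T₀ + y T₀) + 1) / (C * c * η / 2) :=
        ⟨_, rfl⟩
      have hnum : 0 < M - (xa T₀ + y T₀) + 1 := by linarith [hNleM T₀ hT₀0]
      have h6 : T₀ ≤ tb := by
        rw [htb]; have := le_of_lt (div_pos hnum hCcη); linarith
      have h7 := hlin tb h6
      have h8 := hNleM tb (le_trans hT₀0 h6)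
      have e : C * c * η / 2 * (tb - T₀) = M - (xa T₀ + y T₀) + 1 := by
        rw [htb]
        field_simp
        ring
      linarith
    obtain ⟨t2, ht2T, ht2⟩ := hreach_dn
    have ht20 : 0 ≤ t2 := le_trans hT₀0 ht2T
    have hstay_dn3 : ∀ t, t2 ≤ t → ((ybar - η) - (xa t + y t) ≤ 0) ∧
        ((ybar - η) - (xa t + y t) ≤ 0) ∧ ((ybar - η) - (xa t + y t) ≤ 0) := by
      apply stay_nonpos3 _ _ _ _ _ _ t2
        (fun t ht => (hsumd t (le_trans ht20 ht)).const_sub (ybar - η))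
        (fun t ht => (hsumd t (le_trans ht20 ht)).const_sub (ybar - η))
        (fun t ht => (hsumd t (le_trans ht20 ht)).const_sub (ybar - η))
        (show (ybar - η) - (xa t2 + y t2) ≤ 0 by linarith)
        (show (ybar - η) - (xa t2 + y t2) ≤ 0 by linarith)
        (show (ybar - η) - (xa t2 + y t2) ≤ 0 by linarith)
      all_goals {
        intro t ht h1 h2 h3 heq
        have h4 := hdown t (le_trans ht2T ht) (by linarith)
        simp only [neg_lt_zero]
        linarith [hCcη]
      }
    have hstay_dn : ∀ t, t2 ≤ t → ybar - η ≤ xa t + y t :=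
      fun t ht => by linarith [(hstay_dn3 t ht).1]
    refine ⟨max t1 t2, le_trans ht10 (le_max_left _ _), fun t ht => ?_⟩
    have hu1 := hstay_up t (le_trans (le_max_left _ _) ht)
    have hd1 := hstay_dn t (le_trans (le_max_right _ _) ht)
    rw [abs_le]
    constructor <;> linarith
  have hn_tendsto : Filter.Tendsto (fun t => xa t + y t) Filter.atTop (nhds ybar) := by
    rw [Metric.tendsto_atTop]
    intro e he
    obtain ⟨T, hT0, hT⟩ := key (e / 2) (by linarith)
    refine ⟨T, fun t ht => ?_⟩
    rw [Real.dist_eq]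
    have := hT t ht
    linarith [this, abs_nonneg ((xa t + y t) - ybar)]
  have hy_tendsto : Filter.Tendsto y Filter.atTop (nhds ybar) := by
    have h := hn_tendsto.sub hxa_tendsto
    have e : (fun t => (xa t + y t) - xa t) = y := by funext t; ring
    rw [e] at h
    simpa using h
  exact hxa_tendsto.prodMk_nhds (hxd_tendsto.prodMk_nhds hy_tendsto)
end

section
/- Assume b1 − τ − d1 − C·x̄ₐ > 0 and −(a1 + τ − d1 − C·ȳ) > σ2·p·C·ȳ/(d2 + σ2). Then the 2×2 matrix A = [[a1 − b1 + τ, σ2], [p·(b1 − d1), −(d2 + σ2)]] has nonzero determinant, and every eigenvalue of A has strictly negative real part. -/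
/-- Quadratic with negative trace and positive determinant has roots with
negative real part. -/
lemma quad_root_neg_re_s17 (t d : ℝ) (ht : t < 0) (hd : 0 < d) (z : ℂ)
    (hz : z ^ 2 - (t : ℂ) * z + (d : ℂ) = 0) : z.re < 0 := by
  have e1 : z.re ^ 2 - z.im ^ 2 - t * z.re + d = 0 := by
    have := congrArg Complex.re hz
    simp [pow_two, Complex.mul_re, Complex.mul_im, Complex.add_re, Complex.sub_re] at this
    nlinarith [this]
  have e2 : 2 * z.re * z.im - t * z.im = 0 := by
    have := congrArg Complex.im hz
    simp [pow_two, Complex.mul_re, Complex.mul_im] at this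
    nlinarith [this]
  by_contra h
  push_neg at h
  have him : z.im = 0 := by
    have h3 : z.im * (2 * z.re - t) = 0 := by nlinarith [e2]
    rcases mul_eq_zero.1 h3 with h4 | h4
    · exact h4
    · nlinarith
  nlinarith [sq_nonneg z.re, mul_nonneg h h]

/-- Under the fitness conditions `b1 − τ − d1 − C·x̄ₐ > 0` and
`−(a1 + τ − d1 − C·ȳ) > σ2·p·C·ȳ/(d2+σ2)`, the matrix
`A = [[a1 − b1 + τ, σ2], [p·(b1 − d1), −(d2+σ2)]]` has nonzero determinant
and all its eigenvalues have strictly negative real part. -/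
theorem three_dim_dominating_matrix_stable_reversed_transfer
    (a1 b1 d1 d2 τ C σ2 p xabar ybar : ℝ)
    (hd1 : 0 ≤ d1) (ha1 : d1 < a1) (hb1 : d1 < b1) (hd2 : 0 ≤ d2) (hτ : 0 ≤ τ)
    (hC : 0 < C) (hσ2 : 0 < σ2) (hp0 : 0 < p) (hp1 : p < 1)
    (hxabar : xabar = (a1 - d1) * (d2 + σ2) / (C * (d2 + (1 - p) * σ2)))
    (hybar : ybar = (b1 - d1) / C)
    (hfitY : 0 < b1 - τ - d1 - C * xabar)
    (hfitX : σ2 * p * C * ybar / (d2 + σ2) < -(a1 + τ - d1 - C * ybar))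
    (A : Matrix (Fin 2) (Fin 2) ℝ)
    (hA : A = !![a1 - b1 + τ, σ2; p * (b1 - d1), -(d2 + σ2)]) :
    A.det ≠ 0 ∧
    (∀ z : ℂ, ((A.map Complex.ofReal).charpoly).IsRoot z → z.re < 0) := by
  have hds : 0 < d2 + σ2 := by linarith
  have hCy : C * ybar = b1 - d1 := by
    rw [hybar]; field_simp
  rw [hCy] at hfitX
  have hX : σ2 * p * (b1 - d1) < (b1 - a1 - τ) * (d2 + σ2) := by
    have h1 := (div_lt_iff₀ hds).1 hfitX
    have h2 : σ2 * p * C * ybar = σ2 * p * (b1 - d1) := by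
      rw [hybar]; field_simp
    nlinarith [h1, h2]
  -- trace and determinant
  have htr : a1 - b1 + τ - (d2 + σ2) < 0 := by
    nlinarith [mul_pos (mul_pos hσ2 hp0) (by linarith : (0:ℝ) < b1 - d1)]
  have hdetpos : 0 < (a1 - b1 + τ) * (-(d2 + σ2)) - σ2 * (p * (b1 - d1)) := by
    nlinarith [hX]
  have hdet : A.det = (a1 - b1 + τ) * (-(d2 + σ2)) - σ2 * (p * (b1 - d1)) := by
    rw [hA, Matrix.det_fin_two_of]
  refine ⟨by rw [hdet]; exact ne_of_gt hdetpos, ?_⟩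
  intro z hz
  set B := A.map Complex.ofReal with hB
  have htrB : B.trace = ((a1 - b1 + τ - (d2 + σ2) : ℝ) : ℂ) := by
    simp [hB, hA, Matrix.trace_fin_two, Matrix.map_apply]
    push_cast
    ring
  have hdetB : B.det = (((a1 - b1 + τ) * (-(d2 + σ2)) - σ2 * (p * (b1 - d1)) : ℝ) : ℂ) := by
    have : B.det = ((A.det : ℝ) : ℂ) := (RingHom.map_det Complex.ofRealHom A).symm
    rw [this, hdet]
  have hcp : B.charpoly = Polynomial.X ^ 2 - Polynomial.C B.trace * Polynomial.X
      + Polynomial.C B.det := by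
    rw [Matrix.charpoly, Matrix.det_fin_two, Matrix.trace_fin_two, Matrix.det_fin_two,
      Matrix.charmatrix_apply_eq, Matrix.charmatrix_apply_eq,
      Matrix.charmatrix_apply_ne _ _ _ (by decide : (0 : Fin 2) ≠ 1),
      Matrix.charmatrix_apply_ne _ _ _ (by decide : (1 : Fin 2) ≠ 0)]
    simp only [Polynomial.C_sub, Polynomial.C_mul, Polynomial.C_neg, Polynomial.C_add]
    ring
  rw [hcp] at hz
  have hz' : z ^ 2 - ((a1 - b1 + τ - (d2 + σ2) : ℝ) : ℂ) * z
      + (((a1 - b1 + τ) * (-(d2 + σ2)) - σ2 * (p * (b1 - d1)) : ℝ) : ℂ) = 0 := by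
    have := hz
    simp only [Polynomial.IsRoot, Polynomial.eval_add, Polynomial.eval_sub,
      Polynomial.eval_mul, Polynomial.eval_pow, Polynomial.eval_X, Polynomial.eval_C,
      htrB, hdetB] at this
    linear_combination this
  exact quad_root_neg_re_s17 _ _ htr hdetpos z hz'
end

section
/- Let r1, r2, a ∈ ℝ and σ1, σ2 > 0, and set λ = (r1 + r2 + √((r1 − r2)² + 4·σ1·σ2))/2. Then there exists a constant C̃ > 0, depending only on r1, r2, σ1, σ2 and a, such that for every M ≥ 0 and every differentiable solution (x, y) : [0, ∞) → ℝ² of the linear system x'(t) = r1·x(t) + σ2·y(t) + M·e^{a·t}, y'(t) = σ1·x(t) + r2·y(t) with x(0) ≥ 0 and y(0) ≥ 0, one has for all t ≥ 0: x(t) ≤ C̃·max((x(0) + y(0) + (1 + t)·M)·e^{λ·t}, M·e^{a·t}) and y(t) ≤ C̃·max((x(0) + y(0) + (1 + t)·M)·e^{λ·t}, M·e^{a·t}). -/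
open Real Set Filter Topology


lemma pert_pos
    (r1 r2 σ1 σ2 : ℝ) (hσ1 : 0 ≤ σ1) (hσ2 : 0 ≤ σ2)
    (h : ℝ → ℝ) (hh : ∀ t, 0 ≤ t → 0 ≤ h t)
    (x y : ℝ → ℝ)
    (hx : ∀ t, 0 ≤ t → HasDerivAt x (r1 * x t + σ2 * y t + h t) t)
    (hy : ∀ t, 0 ≤ t → HasDerivAt y (σ1 * x t + r2 * y t) t)
    (hx0 : 0 ≤ x 0) (hy0 : 0 ≤ y 0)
    (ε : ℝ) (hε : 0 < ε) :
    ∀ t, 0 ≤ t → 0 < x t + ε * Real.exp ((1 + |r1| + |r2| + σ1 + σ2) * t)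
             ∧ 0 < y t + ε * Real.exp ((1 + |r1| + |r2| + σ1 + σ2) * t) := by
  set K : ℝ := 1 + |r1| + |r2| + σ1 + σ2 with hK
  set xe : ℝ → ℝ := fun t => x t + ε * Real.exp (K * t) with hxe
  set ye : ℝ → ℝ := fun t => y t + ε * Real.exp (K * t) with hye
  have hexp : ∀ t : ℝ, HasDerivAt (fun s => ε * Real.exp (K * s))
      (ε * (K * Real.exp (K * t))) t := by
    intro t
    have h1 : HasDerivAt (fun s : ℝ => K * s) K t := by
      simpa using (hasDerivAt_id t).const_mul K
    have := (Real.hasDerivAt_exp (K * t)).comp t h1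
    simpa [mul_comm, mul_left_comm] using this.const_mul ε
  have hxe' : ∀ t, 0 ≤ t → HasDerivAt xe
      (r1 * x t + σ2 * y t + h t + ε * (K * Real.exp (K * t))) t := by
    intro t ht; exact (hx t ht).add (hexp t)
  have hye' : ∀ t, 0 ≤ t → HasDerivAt ye
      (σ1 * x t + r2 * y t + ε * (K * Real.exp (K * t))) t := by
    intro t ht; exact (hy t ht).add (hexp t)
  by_contra hcon
  push_neg at hcon
  obtain ⟨t0, ht0, hbad⟩ := hcon
  set S : Set ℝ := {t | 0 ≤ t ∧ (xe t ≤ 0 ∨ ye t ≤ 0)} with hS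
  have hne : S.Nonempty := by
    refine ⟨t0, ht0, ?_⟩
    by_cases hp : 0 < xe t0
    · exact Or.inr (hbad hp)
    · exact Or.inl (not_lt.mp hp)
  have hbdd : BddBelow S := ⟨0, fun s hs => hs.1⟩
  set T : ℝ := sInf S with hT
  have hT0 : 0 ≤ T := le_csInf hne fun s hs => hs.1
  have hclos : T ∈ closure S := csInf_mem_closure hne hbdd
  have hcxe : ContinuousAt xe T := (hxe' T hT0).continuousAt
  have hcye : ContinuousAt ye T := (hye' T hT0).continuousAt
  -- min value at T is ≤ 0
  have hmT : min (xe T) (ye T) ≤ 0 := by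
    have hnb : (𝓝[S] T).NeBot := mem_closure_iff_nhdsWithin_neBot.mp hclos
    have htend : Tendsto (fun s => min (xe s) (ye s)) (𝓝[S] T)
        (𝓝 (min (xe T) (ye T))) :=
      (hcxe.min hcye).mono_left nhdsWithin_le_nhds
    refine le_of_tendsto htend ?_
    filter_upwards [self_mem_nhdsWithin] with s hs
    rcases hs.2 with h1 | h1
    · exact min_le_of_left_le h1
    · exact min_le_of_right_le h1
  -- strictly positive before T
  have hbefore : ∀ s, 0 ≤ s → s < T → 0 < xe s ∧ 0 < ye s := by
    intro s hs hsT
    by_contra hc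
    push_neg at hc
    have hsS : s ∈ S := by
      refine ⟨hs, ?_⟩
      by_cases hp : 0 < xe s
      · exact Or.inr (not_lt.mp (fun hq => absurd (hc hp) (not_le.mpr hq)))
      · exact Or.inl (not_lt.mp hp)
    exact absurd (csInf_le hbdd hsS) (not_le.mpr hsT)
  have hxe0pos : ∀ t, 0 ≤ t → (0:ℝ) < ε * Real.exp (K * t) :=
    fun t _ => mul_pos hε (Real.exp_pos _)
  have hTpos : 0 < T := by
    rcases lt_or_eq_of_le hT0 with h' | h'
    · exact h'
    · exfalso
      have hx00 : 0 < xe 0 := by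
        have := hxe0pos 0 le_rfl
        simp only [hxe]
        nlinarith
      have hy00 : 0 < ye 0 := by
        have := hxe0pos 0 le_rfl
        simp only [hye]
        nlinarith
      rw [← h'] at hmT
      have := lt_min hx00 hy00
      linarith
  -- left limits: xe T ≥ 0, ye T ≥ 0
  have hIoo : Ioo 0 T ∈ 𝓝[<] T := Ioo_mem_nhdsLT_of_mem ⟨hTpos, le_rfl⟩
  have hxeT : 0 ≤ xe T := by
    refine ge_of_tendsto (hcxe.continuousWithinAt.tendsto (s := Iio T)) ?_
    filter_upwards [hIoo] with s hs
    exact (hbefore s hs.1.le hs.2).1.le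
  have hyeT : 0 ≤ ye T := by
    refine ge_of_tendsto (hcye.continuousWithinAt.tendsto (s := Iio T)) ?_
    filter_upwards [hIoo] with s hs
    exact (hbefore s hs.1.le hs.2).2.le
  -- slope argument: a function positive before T and vanishing at T has nonpos derivative
  have slope_le : ∀ (f : ℝ → ℝ) (d : ℝ), HasDerivAt f d T → f T = 0 →
      (∀ s, 0 < s → s < T → 0 < f s) → d ≤ 0 := by
    intro f d hf hfT hpos
    have htend : Tendsto (slope f T) (𝓝[<] T) (𝓝 d) :=
      (hasDerivAt_iff_tendsto_slope.mp hf).mono_left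
        (nhdsWithin_mono _ fun s hs => ne_of_lt hs)
    refine le_of_tendsto htend ?_
    filter_upwards [hIoo] with s hs
    have : slope f T s = f s / (s - T) := by
      simp [slope, hfT, div_eq_inv_mul]
    rw [this]
    exact div_nonpos_of_nonneg_of_nonpos (hpos s hs.1 hs.2).le (by linarith [hs.2])
  have heK : (0:ℝ) < ε * Real.exp (K * T) := hxe0pos T hT0
  rcases min_le_iff.mp hmT with hle | hle
  · -- xe T = 0
    have hxeT0 : xe T = 0 := le_antisymm hle hxeT
    have hxT : x T = -(ε * Real.exp (K * T)) := by
      have : x T + ε * Real.exp (K * T) = 0 := hxeT0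
      linarith
    have hyT : -(ε * Real.exp (K * T)) ≤ y T := by
      have : 0 ≤ y T + ε * Real.exp (K * T) := hyeT
      linarith
    have hd : 0 < r1 * x T + σ2 * y T + h T + ε * (K * Real.exp (K * T)) := by
      have h1 : (|r1| - r1) * (ε * Real.exp (K * T)) ≥ 0 :=
        mul_nonneg (by linarith [le_abs_self r1]) heK.le
      have h2 : 0 ≤ σ2 * (y T + ε * Real.exp (K * T)) := mul_nonneg hσ2 hyeT
      have h3 : 0 ≤ h T := hh T hT0
      have hKP : ε * (K * Real.exp (K * T)) =
          ε * Real.exp (K * T) + |r1| * (ε * Real.exp (K * T))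
          + |r2| * (ε * Real.exp (K * T)) + σ1 * (ε * Real.exp (K * T))
          + σ2 * (ε * Real.exp (K * T)) := by rw [hK]; ring
      rw [hxT, hKP]
      nlinarith [mul_nonneg (abs_nonneg r2) heK.le, mul_nonneg hσ1 heK.le,
        mul_nonneg hσ2 heK.le, heK]
    have := slope_le xe _ (hxe' T hT0) hxeT0
      (fun s hs hsT => (hbefore s hs.le hsT).1)
    linarith
  · -- ye T = 0
    have hyeT0 : ye T = 0 := le_antisymm hle hyeT
    have hyT : y T = -(ε * Real.exp (K * T)) := by
      have : y T + ε * Real.exp (K * T) = 0 := hyeT0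
      linarith
    have hxT : -(ε * Real.exp (K * T)) ≤ x T := by
      have : 0 ≤ x T + ε * Real.exp (K * T) := hxeT
      linarith
    have hd : 0 < σ1 * x T + r2 * y T + ε * (K * Real.exp (K * T)) := by
      have h1 : (|r2| - r2) * (ε * Real.exp (K * T)) ≥ 0 :=
        mul_nonneg (by linarith [le_abs_self r2]) heK.le
      have h2 : 0 ≤ σ1 * (x T + ε * Real.exp (K * T)) := mul_nonneg hσ1 hxeT
      have hKP : ε * (K * Real.exp (K * T)) =
          ε * Real.exp (K * T) + |r1| * (ε * Real.exp (K * T))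
          + |r2| * (ε * Real.exp (K * T)) + σ1 * (ε * Real.exp (K * T))
          + σ2 * (ε * Real.exp (K * T)) := by rw [hK]; ring
      rw [hyT, hKP]
      nlinarith [mul_nonneg (abs_nonneg r1) heK.le, mul_nonneg hσ1 heK.le,
        mul_nonneg hσ2 heK.le, heK]
    have := slope_le ye _ (hye' T hT0) hyeT0
      (fun s hs hsT => (hbefore s hs.le hsT).2)
    linarith

lemma sys_nonneg
    (r1 r2 σ1 σ2 : ℝ) (hσ1 : 0 ≤ σ1) (hσ2 : 0 ≤ σ2)
    (h : ℝ → ℝ) (hh : ∀ t, 0 ≤ t → 0 ≤ h t)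
    (x y : ℝ → ℝ)
    (hx : ∀ t, 0 ≤ t → HasDerivAt x (r1 * x t + σ2 * y t + h t) t)
    (hy : ∀ t, 0 ≤ t → HasDerivAt y (σ1 * x t + r2 * y t) t)
    (hx0 : 0 ≤ x 0) (hy0 : 0 ≤ y 0) :
    ∀ t, 0 ≤ t → 0 ≤ x t ∧ 0 ≤ y t := by
  intro t ht
  set K : ℝ := 1 + |r1| + |r2| + σ1 + σ2 with hK
  have key : ∀ ε : ℝ, 0 < ε → -(ε * Real.exp (K * t)) < x t ∧
      -(ε * Real.exp (K * t)) < y t := by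
    intro ε hε
    have := pert_pos r1 r2 σ1 σ2 hσ1 hσ2 h hh x y hx hy hx0 hy0 ε hε t ht
    constructor <;> [linarith [this.1]; linarith [this.2]]
  constructor
  · by_contra hc
    push_neg at hc
    have he : (0:ℝ) < Real.exp (K * t) := Real.exp_pos _
    have hεp : 0 < -x t / Real.exp (K * t) := div_pos (by linarith) he
    have := (key _ hεp).1
    rw [div_mul_cancel₀ _ he.ne'] at this
    linarith
  · by_contra hc
    push_neg at hc
    have he : (0:ℝ) < Real.exp (K * t) := Real.exp_pos _
    have hεp : 0 < -y t / Real.exp (K * t) := div_pos (by linarith) he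
    have := (key _ hεp).2
    rw [div_mul_cancel₀ _ he.ne'] at this
    linarith

lemma hde_aux (c s : ℝ) : HasDerivAt (fun u => Real.exp (c * u)) (c * Real.exp (c * s)) s := by
  have h1 : HasDerivAt (fun u : ℝ => c * u) c s := by simpa using (hasDerivAt_id s).const_mul c
  exact ((Real.hasDerivAt_exp (c * s)).comp s h1).congr_deriv (mul_comm _ _)

set_option maxHeartbeats 1000000 in
/-- Expected-value bound for a bi-type branching process with exponential
immigration: there is a constant `C̃ > 0` (depending only on `r1, r2, σ1, σ2, a`)
such that every nonnegative solution of the linear system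
`x' = r1·x + σ2·y + M·e^{a t}`, `y' = σ1·x + r2·y` satisfies
`x(t), y(t) ≤ C̃·max((x(0)+y(0)+(1+t)M)·e^{λ t}, M·e^{a t})`. -/
theorem bitype_expectation_bound
    (r1 r2 a σ1 σ2 lam : ℝ) (hσ1 : 0 < σ1) (hσ2 : 0 < σ2)
    (hlam : lam = (r1 + r2 + Real.sqrt ((r1 - r2) ^ 2 + 4 * σ1 * σ2)) / 2) :
    ∃ Ctilde : ℝ, 0 < Ctilde ∧
      ∀ M : ℝ, 0 ≤ M →
        ∀ x y : ℝ → ℝ,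
          (∀ t, 0 ≤ t →
            HasDerivAt x (r1 * x t + σ2 * y t + M * Real.exp (a * t)) t) →
          (∀ t, 0 ≤ t → HasDerivAt y (σ1 * x t + r2 * y t) t) →
          0 ≤ x 0 → 0 ≤ y 0 →
          ∀ t, 0 ≤ t →
            x t ≤ Ctilde * max ((x 0 + y 0 + (1 + t) * M) * Real.exp (lam * t))
              (M * Real.exp (a * t)) ∧
            y t ≤ Ctilde * max ((x 0 + y 0 + (1 + t) * M) * Real.exp (lam * t))
              (M * Real.exp (a * t)) := by
  have hD : (0:ℝ) ≤ (r1 - r2) ^ 2 + 4 * σ1 * σ2 := by positivity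
  have hsq : Real.sqrt ((r1 - r2) ^ 2 + 4 * σ1 * σ2) ^ 2
      = (r1 - r2) ^ 2 + 4 * σ1 * σ2 := Real.sq_sqrt hD
  have habs : |r1 - r2| < Real.sqrt ((r1 - r2) ^ 2 + 4 * σ1 * σ2) := by
    rw [← Real.sqrt_sq_eq_abs]
    exact Real.sqrt_lt_sqrt (sq_nonneg _) (by nlinarith)
  have hw2 : 0 < lam - r1 := by
    have h := le_abs_self (r1 - r2)
    rw [hlam]; linarith
  have key : (lam - r2) * (lam - r1) = σ1 * σ2 := by
    have h2 : 2 * lam - r1 - r2 = Real.sqrt ((r1 - r2) ^ 2 + 4 * σ1 * σ2) := by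
      rw [hlam]; ring
    have h3 : (2 * lam - r1 - r2) ^ 2 = (r1 - r2) ^ 2 + 4 * σ1 * σ2 := by
      rw [h2]; exact hsq
    linear_combination h3 / 4
  set κ : ℝ := if a = lam then σ1 else 2 * σ1 / |a - lam| with hκdef
  have hκpos : 0 < κ := by
    rw [hκdef]; split_ifs with hal
    · exact hσ1
    · exact div_pos (by linarith) (abs_pos.mpr (sub_ne_zero.mpr hal))
  have hmin : 0 < min σ1 (lam - r1) := lt_min hσ1 hw2
  refine ⟨(σ1 + (lam - r1) + κ) / min σ1 (lam - r1),
    div_pos (by linarith) hmin, ?_⟩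
  intro M hM x y hx hy hx0 hy0 t ht
  have nonneg := sys_nonneg r1 r2 σ1 σ2 hσ1.le hσ2.le
    (fun s => M * Real.exp (a * s)) (fun s _ => by positivity) x y hx hy hx0 hy0
  set R : ℝ := max ((x 0 + y 0 + (1 + t) * M) * Real.exp (lam * t))
      (M * Real.exp (a * t)) with hRdef
  have hfirstR : (x 0 + y 0 + (1 + t) * M) * Real.exp (lam * t) ≤ R :=
    le_max_left _ _
  have hRnn : 0 ≤ R := le_trans (by positivity) hfirstR
  set L : ℝ → ℝ := fun s => σ1 * x s + (lam - r1) * y s with hLdef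
  have hL : ∀ s, 0 ≤ s → HasDerivAt L
      (lam * L s + σ1 * (M * Real.exp (a * s))) s := by
    intro s hs
    have h1 := ((hx s hs).const_mul σ1).add ((hy s hs).const_mul (lam - r1))
    refine h1.congr_deriv ?_
    simp only [hLdef]
    linear_combination (-(y s)) * key
  set E : ℝ → ℝ := if a = lam then (fun s => s)
    else fun s => (Real.exp ((a - lam) * s) - 1) / (a - lam) with hEdef
  have hE : ∀ s : ℝ, HasDerivAt E (Real.exp ((a - lam) * s)) s := by
    intro s
    rw [hEdef]; split_ifs with hal
    · exact (hasDerivAt_id s).congr_deriv (by simp [hal])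
    · have hc : a - lam ≠ 0 := sub_ne_zero.mpr hal
      have := ((hde_aux (a - lam) s).sub_const 1).div_const (a - lam)
      rwa [mul_div_cancel_left₀ _ hc] at this
  have hE0 : E 0 = 0 := by
    rw [hEdef]; split_ifs <;> simp
  have hG : ∀ s, 0 ≤ s →
      HasDerivAt (fun u => Real.exp (-(lam * u)) * L u - σ1 * M * E u) 0 s := by
    intro s hs
    have h1 : HasDerivAt (fun u => Real.exp (-(lam * u)))
        (-lam * Real.exp (-(lam * s))) s := by
      simpa [neg_mul] using hde_aux (-lam) s
    have h3 := (h1.mul (hL s hs)).sub ((hE s).const_mul (σ1 * M))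
    refine h3.congr_deriv ?_
    have hee : Real.exp (-(lam * s)) * Real.exp (a * s)
        = Real.exp ((a - lam) * s) := by
      rw [← Real.exp_add]; ring_nf
    linear_combination (σ1 * M) * hee
  have hconst := constant_of_has_deriv_right_zero
    (f := fun u => Real.exp (-(lam * u)) * L u - σ1 * M * E u)
    (a := 0) (b := t)
    (fun s hs => ((hG s hs.1).continuousAt).continuousWithinAt)
    (fun s hs => (hG s hs.1).hasDerivWithinAt) t ⟨ht, le_rfl⟩
  have hconst' : Real.exp (-(lam * t)) * L t - σ1 * M * E t = L 0 := by
    simpa [hE0] using hconst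
  have hinv : Real.exp (-(lam * t)) * Real.exp (lam * t) = 1 := by
    rw [← Real.exp_add]; simp
  have hrep : L t = (L 0 + σ1 * M * E t) * Real.exp (lam * t) := by
    linear_combination Real.exp (lam * t) * hconst' - L t * hinv
  have hMmax : M * max (Real.exp (lam * t)) (Real.exp (a * t)) ≤ R := by
    rcases max_cases (Real.exp (lam * t)) (Real.exp (a * t)) with ⟨hm, _⟩ | ⟨hm, _⟩ <;>
      rw [hm]
    · refine le_trans ?_ hfirstR
      nlinarith [Real.exp_pos (lam * t), mul_nonneg (mul_nonneg hM ht)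
        (Real.exp_pos (lam * t)).le, mul_nonneg (add_nonneg hx0 hy0) (Real.exp_pos (lam * t)).le]
    · exact le_max_right _ _
  have hEbound : σ1 * M * (E t * Real.exp (lam * t)) ≤ κ * R := by
    by_cases hal : a = lam
    · have hEt : E t = t := by rw [hEdef, if_pos hal]
      rw [hEt, hκdef, if_pos hal]
      have h1 : M * (t * Real.exp (lam * t)) ≤ R := by
        refine le_trans ?_ hfirstR
        nlinarith [Real.exp_pos (lam * t), mul_nonneg (add_nonneg (add_nonneg hx0 hy0) hM)
          (Real.exp_pos (lam * t)).le]
      calc σ1 * M * (t * Real.exp (lam * t)) = σ1 * (M * (t * Real.exp (lam * t))) := by ring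
        _ ≤ σ1 * R := mul_le_mul_of_nonneg_left h1 hσ1.le
    · have hc : a - lam ≠ 0 := sub_ne_zero.mpr hal
      have habsd : 0 < |a - lam| := abs_pos.mpr hc
      have hEt : E t * Real.exp (lam * t)
          = (Real.exp (a * t) - Real.exp (lam * t)) / (a - lam) := by
        rw [hEdef, if_neg hal, div_mul_eq_mul_div, sub_mul, ← Real.exp_add, one_mul]
        ring_nf
      have habs2 : |Real.exp (a * t) - Real.exp (lam * t)|
          ≤ 2 * max (Real.exp (lam * t)) (Real.exp (a * t)) := by
        rw [abs_sub_le_iff]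
        constructor <;>
          linarith [le_max_left (Real.exp (lam * t)) (Real.exp (a * t)),
            le_max_right (Real.exp (lam * t)) (Real.exp (a * t)),
            (Real.exp_pos (a * t)).le, (Real.exp_pos (lam * t)).le]
      have hq : (Real.exp (a * t) - Real.exp (lam * t)) / (a - lam)
          ≤ 2 * max (Real.exp (lam * t)) (Real.exp (a * t)) / |a - lam| := by
        calc (Real.exp (a * t) - Real.exp (lam * t)) / (a - lam)
            ≤ |(Real.exp (a * t) - Real.exp (lam * t)) / (a - lam)| := le_abs_self _
          _ = |Real.exp (a * t) - Real.exp (lam * t)| / |a - lam| := abs_div _ _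
          _ ≤ _ := (div_le_div_iff_of_pos_right habsd).mpr habs2
      rw [hEt, hκdef, if_neg hal]
      calc σ1 * M * ((Real.exp (a * t) - Real.exp (lam * t)) / (a - lam))
          ≤ σ1 * M * (2 * max (Real.exp (lam * t)) (Real.exp (a * t)) / |a - lam|) :=
            mul_le_mul_of_nonneg_left hq (by positivity)
        _ = (2 * σ1 / |a - lam|) * (M * max (Real.exp (lam * t)) (Real.exp (a * t))) := by
            field_simp
        _ ≤ (2 * σ1 / |a - lam|) * R := mul_le_mul_of_nonneg_left hMmax (by positivity)
  have h01 : L 0 ≤ (σ1 + (lam - r1)) * (x 0 + y 0) := by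
    simp only [hLdef]
    nlinarith [mul_nonneg hσ1.le hy0, mul_nonneg hw2.le hx0]
  have h02 : (x 0 + y 0) * Real.exp (lam * t) ≤ R := by
    refine le_trans ?_ hfirstR
    nlinarith [mul_nonneg (mul_nonneg (by linarith : (0:ℝ) ≤ 1 + t) hM)
      (Real.exp_pos (lam * t)).le]
  have h0 : L 0 * Real.exp (lam * t) ≤ (σ1 + (lam - r1)) * R := by
    calc L 0 * Real.exp (lam * t)
        ≤ ((σ1 + (lam - r1)) * (x 0 + y 0)) * Real.exp (lam * t) :=
          mul_le_mul_of_nonneg_right h01 (Real.exp_pos _).le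
      _ = (σ1 + (lam - r1)) * ((x 0 + y 0) * Real.exp (lam * t)) := by ring
      _ ≤ (σ1 + (lam - r1)) * R := mul_le_mul_of_nonneg_left h02 (by linarith)
  have hLt : L t ≤ (σ1 + (lam - r1)) * R + κ * R := by
    rw [hrep]
    calc (L 0 + σ1 * M * E t) * Real.exp (lam * t)
        = L 0 * Real.exp (lam * t) + σ1 * M * (E t * Real.exp (lam * t)) := by ring
      _ ≤ (σ1 + (lam - r1)) * R + κ * R := add_le_add h0 hEbound
  have hxL : σ1 * x t ≤ L t := by
    simp only [hLdef]
    nlinarith [mul_nonneg hw2.le (nonneg t ht).2]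
  have hyL : (lam - r1) * y t ≤ L t := by
    simp only [hLdef]
    nlinarith [mul_nonneg hσ1.le (nonneg t ht).1]
  constructor
  · rw [div_mul_eq_mul_div, le_div_iff₀ hmin]
    nlinarith [mul_le_mul_of_nonneg_left (min_le_left σ1 (lam - r1)) (nonneg t ht).1,
      hxL, hLt]
  · rw [div_mul_eq_mul_div, le_div_iff₀ hmin]
    nlinarith [mul_le_mul_of_nonneg_left (min_le_right σ1 (lam - r1)) (nonneg t ht).2,
      hyL, hLt]
end
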